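/- arXiv:2401.12763 — 6 statements merged into one kernel-verified Lean document; each statement's English description precedes it below -/
import Mathlib

section
/- Consider the binary two-component channel: states S = (S⁽⁰⁾, S⁽¹⁾) uniform on {0,1}², input X = (A, B) ∈ {0,1}², output Y = (A, B ⊕ S⁽⁽ᴬ⁾⁾), and one-bit assistance alphabet 𝒯 = {0,1}. For any joint distribution of the form P_S · P_{UV} · P_{T|VS} · P_{X|UVT} · W_{Y|XS} (with S independent of (U,V), T a function of (V,S), and X a function of (U,V,T)), it is impossible that both I(U;X|V,T) = 2 and I(U,V;Y) = 2 hold simultaneously. Consequently min{I(UV;Y), I(U;X|VT)} < 2 for every such distribution. -/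
open scoped BigOperators Classical
open Real Finset

noncomputable section

/-- A probability mass function on a finite sample space. -/
structure FinProb (Ω : Type*) [Fintype Ω] where
  p : Ω → ℝ
  nonneg : ∀ ω, 0 ≤ p ω
  sum_one : ∑ ω, p ω = 1

namespace FinProb

variable {Ω : Type*} [Fintype Ω]

/-- Probability of an event. -/
def pr (μ : FinProb Ω) (E : Ω → Prop) : ℝ := ∑ ω, if E ω then μ.p ω else 0

/-- Distribution of a random variable. -/
def dist (μ : FinProb Ω) {α : Type*} [Fintype α] (X : Ω → α) (x : α) : ℝ :=
  μ.pr (fun ω => X ω = x)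

/-- Shannon entropy (in bits) of a finite random variable. -/
def H (μ : FinProb Ω) {α : Type*} [Fintype α] (X : Ω → α) : ℝ :=
  ∑ x, -(μ.dist X x) * Real.logb 2 (μ.dist X x)

/-- Joint entropy H(X,Y). -/
def H2 (μ : FinProb Ω) {α β : Type*} [Fintype α] [Fintype β] (X : Ω → α) (Y : Ω → β) : ℝ :=
  μ.H (fun ω => (X ω, Y ω))

/-- Conditional entropy H(X|Y). -/
def condH (μ : FinProb Ω) {α β : Type*} [Fintype α] [Fintype β] (X : Ω → α) (Y : Ω → β) : ℝ :=
  μ.H2 X Y - μ.H Y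

/-- Mutual information I(X;Y) in bits. -/
def mi (μ : FinProb Ω) {α β : Type*} [Fintype α] [Fintype β] (X : Ω → α) (Y : Ω → β) : ℝ :=
  μ.H X + μ.H Y - μ.H2 X Y

/-- Conditional mutual information I(X;Y|Z) in bits. -/
def cmi (μ : FinProb Ω) {α β γ : Type*} [Fintype α] [Fintype β] [Fintype γ]
    (X : Ω → α) (Y : Ω → β) (Z : Ω → γ) : ℝ :=
  μ.H2 X Z + μ.H2 Y Z - μ.H (fun ω => (X ω, Y ω, Z ω)) - μ.H Z

/-- Conditional probability of event `A` given event `E`. -/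
def cpr (μ : FinProb Ω) (A E : Ω → Prop) : ℝ :=
  μ.pr (fun ω => A ω ∧ E ω) / μ.pr E

/-- Conditional distribution of `X` given the event `E`. -/
def distCond (μ : FinProb Ω) {α : Type*} [Fintype α] (X : Ω → α) (E : Ω → Prop) (x : α) : ℝ :=
  μ.cpr (fun ω => X ω = x) E

/-- Entropy of `X` under the conditional distribution given the event `E`. -/
def entCond (μ : FinProb Ω) {α : Type*} [Fintype α] (X : Ω → α) (E : Ω → Prop) : ℝ :=
  ∑ x, -(μ.distCond X E x) * Real.logb 2 (μ.distCond X E x)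

/-- Conditional entropy H(X | T, E): entropy of `X` given the random variable `T`,
all within the event `E` (averaged over `T` with conditional weights). -/
def condHOn (μ : FinProb Ω) {α β : Type*} [Fintype α] [Fintype β]
    (X : Ω → α) (T : Ω → β) (E : Ω → Prop) : ℝ :=
  ∑ t, μ.cpr (fun ω => T ω = t) E * μ.entCond X (fun ω => T ω = t ∧ E ω)

end FinProb
/-! ### Auxiliary machinery -/


namespace Stmt3Aux

/-- binary negMulLog -/
def nml (x : ℝ) : ℝ := -x * Real.logb 2 x

lemma nml_eq (x : ℝ) : nml x = Real.negMulLog x / Real.log 2 := by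
  simp only [nml, Real.negMulLog, Real.logb]; ring

@[simp] lemma nml_zero : nml 0 = 0 := by simp [nml]

lemma nml_nonneg {x : ℝ} (h0 : 0 ≤ x) (h1 : x ≤ 1) : 0 ≤ nml x := by
  rw [nml_eq]
  exact div_nonneg (Real.negMulLog_nonneg h0 h1) (Real.log_nonneg one_le_two)

lemma nml_pos {x : ℝ} (h0 : 0 < x) (h1 : x < 1) : 0 < nml x := by
  have : Real.logb 2 x < 0 := Real.logb_neg one_lt_two h0 h1
  have := mul_pos h0 (neg_pos.mpr this)
  simpa [nml] using by linarith [this]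

lemma nml_mul (x y : ℝ) : nml (x * y) = x * nml y + y * nml x := by
  simp only [nml_eq, Real.negMulLog_mul]
  ring

lemma sum_nml_le {α : Type*} [Fintype α] (q : α → ℝ) (h0 : ∀ x, 0 ≤ q x)
    (h1 : ∑ x, q x = 1) : ∑ x, nml (q x) ≤ Real.logb 2 (Fintype.card α) := by
  have hne : Nonempty α := by
    by_contra h
    rw [not_nonempty_iff] at h
    simp [Finset.univ_eq_empty] at h1
  have hn : 0 < (Fintype.card α : ℝ) := by
    exact_mod_cast Fintype.card_pos
  -- Jensen for negMulLog
  have hjen := Real.concaveOn_negMulLog.le_map_sum (t := Finset.univ)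
    (w := fun _ : α => (Fintype.card α : ℝ)⁻¹) (p := q)
    (fun i _ => by positivity)
    (by
      simp only [Finset.sum_const, Finset.card_univ, nsmul_eq_mul]
      field_simp)
    (fun i _ => Set.mem_Ici.mpr (h0 i))
  have hsum : ∑ i : α, (Fintype.card α : ℝ)⁻¹ • q i = (Fintype.card α : ℝ)⁻¹ := by
    rw [← Finset.smul_sum]; simp [h1]
  rw [hsum] at hjen
  have hval : Real.negMulLog ((Fintype.card α : ℝ)⁻¹)
      = (Fintype.card α : ℝ)⁻¹ * Real.log (Fintype.card α) := by
    simp [Real.negMulLog, Real.log_inv]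
  rw [hval] at hjen
  have h2 : ∑ i : α, Real.negMulLog (q i) ≤ Real.log (Fintype.card α) := by
    have := mul_le_mul_of_nonneg_left hjen (le_of_lt hn)
    rw [Finset.mul_sum] at this
    calc ∑ i : α, Real.negMulLog (q i)
        = ∑ i : α, (Fintype.card α : ℝ) * ((Fintype.card α : ℝ)⁻¹ • Real.negMulLog (q i)) := by
          apply Finset.sum_congr rfl; intro i _; rw [smul_eq_mul]; field_simp
      _ ≤ (Fintype.card α : ℝ) * ((Fintype.card α : ℝ)⁻¹ * Real.log (Fintype.card α)) := this
      _ = Real.log (Fintype.card α) := by field_simp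
  have hlog2 : 0 < Real.log 2 := Real.log_pos one_lt_two
  calc ∑ x, nml (q x) = (∑ x, Real.negMulLog (q x)) / Real.log 2 := by
        rw [Finset.sum_div]; exact Finset.sum_congr rfl fun x _ => nml_eq (q x)
    _ ≤ Real.log (Fintype.card α) / Real.log 2 := by
        gcongr
    _ = Real.logb 2 (Fintype.card α) := rfl

lemma eq_of_sum_nml_zero {α : Type*} [Fintype α] (q : α → ℝ) (h0 : ∀ x, 0 ≤ q x)
    (h1 : ∑ x, q x = 1) (hz : ∑ x, nml (q x) = 0) {x y : α}
    (hx : 0 < q x) (hy : 0 < q y) : x = y := by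
  have hle1 : ∀ z, q z ≤ 1 := by
    intro z
    calc q z ≤ ∑ w, q w := Finset.single_le_sum (fun w _ => h0 w) (Finset.mem_univ z)
      _ = 1 := h1
  have hterm : ∀ z ∈ Finset.univ, nml (q z) = 0 :=
    (Finset.sum_eq_zero_iff_of_nonneg (fun z _ => nml_nonneg (h0 z) (hle1 z))).mp hz
  have hq1 : ∀ z, 0 < q z → q z = 1 := by
    intro z hzpos
    rcases lt_or_eq_of_le (hle1 z) with h | h
    · exact absurd (hterm z (Finset.mem_univ z)) (ne_of_gt (nml_pos hzpos h))
    · exact h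
  by_contra hne
  have : (2 : ℝ) ≤ 1 := by
    have hsub : ({x, y} : Finset α) ⊆ Finset.univ := Finset.subset_univ _
    have := Finset.sum_le_sum_of_subset_of_nonneg hsub (fun z _ _ => h0 z)
    rw [Finset.sum_pair hne, hq1 x hx, hq1 y hy, h1] at this
    linarith
  linarith

lemma sum_nml_le_one_of_pair {α : Type*} [Fintype α] (q : α → ℝ) (h0 : ∀ x, 0 ≤ q x)
    (h1 : ∑ x, q x = 1) (x0 x1 : α) (hne : x0 ≠ x1)
    (hsupp : ∀ x, 0 < q x → x = x0 ∨ x = x1) : ∑ x, nml (q x) ≤ 1 := by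
  have hq0 : ∀ x, x ≠ x0 → x ≠ x1 → q x = 0 := by
    intro x hx0 hx1
    rcases lt_or_eq_of_le (h0 x) with h | h
    · rcases hsupp x h with h' | h' <;> simp_all
    · exact h.symm
  have hsum2 : ∑ x, nml (q x) = nml (q x0) + nml (q x1) := by
    rw [show nml (q x0) + nml (q x1) = ∑ x ∈ ({x0, x1} : Finset α), nml (q x) from (Finset.sum_pair (f := fun x => nml (q x)) hne).symm]
    apply (Finset.sum_subset (Finset.subset_univ _) _).symm
    intro x _ hx
    simp only [Finset.mem_insert, Finset.mem_singleton, not_or] at hx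
    rw [hq0 x hx.1 hx.2, nml_zero]
  have hsumq : q x0 + q x1 = 1 := by
    rw [← h1, ← Finset.sum_pair hne]
    apply Finset.sum_subset (Finset.subset_univ _)
    intro x _ hx
    simp only [Finset.mem_insert, Finset.mem_singleton, not_or] at hx
    exact hq0 x hx.1 hx.2
  rw [hsum2]
  have := sum_nml_le (fun b : Bool => if b then q x1 else q x0)
    (fun b => by cases b <;> simp [h0]) (by rw [Fintype.sum_bool]; simpa using by linarith [hsumq])
  rw [Fintype.sum_bool] at this
  simp only [if_true, if_false, Fintype.card_bool] at this
  calc nml (q x0) + nml (q x1) = nml (q x1) + nml (q x0) := by ring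
    _ ≤ Real.logb 2 (2 : ℕ) := this
    _ = 1 := by norm_num

end Stmt3Aux

namespace Stmt3Aux
open FinProb

variable {Ω : Type*} [Fintype Ω] (μ : FinProb Ω)

lemma pr_nonneg (E : Ω → Prop) : 0 ≤ μ.pr E :=
  Finset.sum_nonneg fun ω _ => by by_cases h : E ω <;> simp [h, μ.nonneg]

lemma pr_mono {A B : Ω → Prop} (h : ∀ ω, A ω → B ω) : μ.pr A ≤ μ.pr B := by
  apply Finset.sum_le_sum
  intro ω _
  by_cases hA : A ω
  · simp [hA, h ω hA]
  · simp only [hA, if_false]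
    split <;> simp [μ.nonneg]

lemma pr_congr {A B : Ω → Prop} (h : ∀ ω, A ω ↔ B ω) : μ.pr A = μ.pr B :=
  le_antisymm (pr_mono μ fun ω => (h ω).mp) (pr_mono μ fun ω => (h ω).mpr)

lemma pr_pos_elim {E : Ω → Prop} (h : 0 < μ.pr E) : ∃ ω, 0 < μ.p ω ∧ E ω := by
  by_contra hc
  push_neg at hc
  have : μ.pr E = 0 := by
    apply Finset.sum_eq_zero
    intro ω _
    by_cases hE : E ω
    · simp only [hE, if_true]
      rcases lt_or_eq_of_le (μ.nonneg ω) with h' | h'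
      · exact absurd hE (by simpa using hc ω h')
      · exact h'.symm
    · simp [hE]
  rw [this] at h; exact lt_irrefl 0 h

lemma pr_pos_of_witness {E : Ω → Prop} (ω : Ω) (hp : 0 < μ.p ω) (hE : E ω) : 0 < μ.pr E := by
  have : μ.p ω ≤ μ.pr E := by
    have := Finset.single_le_sum (f := fun ω' => if E ω' then μ.p ω' else 0)
      (fun ω' _ => by by_cases h : E ω' <;> simp [h, μ.nonneg]) (Finset.mem_univ ω)
    simpa [hE, FinProb.pr] using this
  linarith

lemma dist_nonneg' {α : Type*} [Fintype α] (X : Ω → α) (x : α) : 0 ≤ μ.dist X x :=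
  pr_nonneg μ _

lemma sum_pr_eq {α : Type*} [Fintype α] (X : Ω → α) (E : Ω → Prop) :
    ∑ x, μ.pr (fun ω => X ω = x ∧ E ω) = μ.pr E := by
  unfold FinProb.pr
  rw [Finset.sum_comm]
  apply Finset.sum_congr rfl
  intro ω _
  by_cases hE : E ω <;> simp [hE]

lemma dist_sum {α : Type*} [Fintype α] (X : Ω → α) : ∑ x, μ.dist X x = 1 := by
  have h := sum_pr_eq μ X (fun _ => True)
  have h2 : μ.pr (fun _ => True) = 1 := by
    unfold FinProb.pr; simpa using μ.sum_one
  rw [h2] at h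
  rw [← h]
  apply Finset.sum_congr rfl
  intro x _
  exact pr_congr μ (by simp)

lemma distCond_nonneg {α : Type*} [Fintype α] (X : Ω → α) (E : Ω → Prop) (x : α) :
    0 ≤ μ.distCond X E x :=
  div_nonneg (pr_nonneg μ _) (pr_nonneg μ _)

lemma distCond_le_one {α : Type*} [Fintype α] (X : Ω → α) (E : Ω → Prop) (x : α) :
    μ.distCond X E x ≤ 1 := by
  unfold FinProb.distCond FinProb.cpr
  rcases lt_or_eq_of_le (pr_nonneg μ E) with h | h
  · exact div_le_one_of_le₀ (pr_mono μ fun ω hω => hω.2) (le_of_lt h)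
  · have : μ.pr (fun ω => X ω = x ∧ E ω) = 0 :=
      le_antisymm (h ▸ pr_mono μ fun ω hω => hω.2) (pr_nonneg μ _)
    rw [this]; simp

lemma distCond_sum {α : Type*} [Fintype α] (X : Ω → α) (E : Ω → Prop) (h : 0 < μ.pr E) :
    ∑ x, μ.distCond X E x = 1 := by
  unfold FinProb.distCond FinProb.cpr
  rw [← Finset.sum_div, sum_pr_eq, div_self (ne_of_gt h)]

lemma entCond_eq {α : Type*} [Fintype α] (X : Ω → α) (E : Ω → Prop) :
    μ.entCond X E = ∑ x, nml (μ.distCond X E x) := rfl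

lemma entCond_nonneg {α : Type*} [Fintype α] (X : Ω → α) (E : Ω → Prop) :
    0 ≤ μ.entCond X E := by
  rw [entCond_eq]
  exact Finset.sum_nonneg fun x _ => nml_nonneg (distCond_nonneg μ X E x) (distCond_le_one μ X E x)

lemma H_eq {α : Type*} [Fintype α] (X : Ω → α) : μ.H X = ∑ x, nml (μ.dist X x) := rfl

lemma H_comap {α β : Type*} [Fintype α] [Fintype β] (W : Ω → α) (φ : α → β)
    (hφ : Function.Injective φ) : μ.H (fun ω => φ (W ω)) = μ.H W := by
  rw [H_eq, H_eq]
  rw [← Finset.sum_subset (Finset.subset_univ (Finset.univ.image φ))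
    (fun b _ hb => ?_)]
  · rw [Finset.sum_image (fun a _ a' _ h => hφ h)]
    apply Finset.sum_congr rfl
    intro a _
    congr 1
    exact pr_congr μ fun ω => ⟨fun h => hφ h, fun h => congrArg φ h⟩
  · have : μ.dist (fun ω => φ (W ω)) b = 0 := by
      unfold FinProb.dist FinProb.pr
      apply Finset.sum_eq_zero
      intro ω _
      have : ¬ (φ (W ω) = b) := by
        intro h
        exact hb (h ▸ Finset.mem_image_of_mem φ (Finset.mem_univ (W ω)))
      simp [this]
    rw [this, nml_zero]

lemma dist_prod_eq {α β : Type*} [Fintype α] [Fintype β] (A : Ω → α) (B : Ω → β) (a : α) (b : β) :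
    μ.dist (fun ω => (A ω, B ω)) (a, b) = μ.pr (fun ω => A ω = a ∧ B ω = b) :=
  pr_congr μ fun ω => by simp [Prod.ext_iff]

lemma dist_mul_distCond {α β : Type*} [Fintype α] [Fintype β] (A : Ω → α) (B : Ω → β)
    (a : α) (b : β) :
    μ.dist (fun ω => (A ω, B ω)) (a, b)
      = μ.dist B b * μ.distCond A (fun ω => B ω = b) a := by
  rw [dist_prod_eq]
  unfold FinProb.distCond FinProb.cpr
  by_cases hb : μ.dist B b = 0
  · have h1 : μ.pr (fun ω => A ω = a ∧ B ω = b) = 0 :=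
      le_antisymm (hb ▸ pr_mono μ fun ω hω => hω.2) (pr_nonneg μ _)
    rw [h1, hb, zero_mul]
  · exact (mul_div_cancel₀ _ hb).symm

lemma decomp {α β : Type*} [Fintype α] [Fintype β] (A : Ω → α) (B : Ω → β) :
    μ.H2 A B = μ.H B + ∑ b, μ.dist B b * μ.entCond A (fun ω => B ω = b) := by
  unfold FinProb.H2
  rw [H_eq]
  rw [Fintype.sum_prod_type]
  rw [Finset.sum_comm]
  have key : ∀ b : β, ∑ a, nml (μ.dist (fun ω => (A ω, B ω)) (a, b))
      = nml (μ.dist B b) + μ.dist B b * μ.entCond A (fun ω => B ω = b) := by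
    intro b
    by_cases hb : μ.dist B b = 0
    · have : ∀ a, μ.dist (fun ω => (A ω, B ω)) (a, b) = 0 := by
        intro a; rw [dist_mul_distCond, hb, zero_mul]
      have hent : μ.entCond A (fun ω => B ω = b) = 0 := by
        rw [entCond_eq]
        apply Finset.sum_eq_zero
        intro a _
        have : μ.distCond A (fun ω => B ω = b) a = 0 := by
          unfold FinProb.distCond FinProb.cpr
          have h1 : μ.pr (fun ω => A ω = a ∧ B ω = b) = 0 :=
            le_antisymm (hb ▸ pr_mono μ fun ω hω => hω.2) (pr_nonneg μ _)
          rw [h1, zero_div]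
        rw [this, nml_zero]
      simp [this, hb, hent]
    · have hpos : 0 < μ.dist B b := lt_of_le_of_ne (dist_nonneg' μ B b) (Ne.symm hb)
      calc ∑ a, nml (μ.dist (fun ω => (A ω, B ω)) (a, b))
          = ∑ a, nml (μ.dist B b * μ.distCond A (fun ω => B ω = b) a) := by
            apply Finset.sum_congr rfl; intro a _; rw [dist_mul_distCond]
        _ = ∑ a, (μ.dist B b * nml (μ.distCond A (fun ω => B ω = b) a)
              + μ.distCond A (fun ω => B ω = b) a * nml (μ.dist B b)) := by
            apply Finset.sum_congr rfl; intro a _; rw [nml_mul]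
        _ = μ.dist B b * μ.entCond A (fun ω => B ω = b)
              + (∑ a, μ.distCond A (fun ω => B ω = b) a) * nml (μ.dist B b) := by
            rw [Finset.sum_add_distrib, ← Finset.mul_sum, ← Finset.sum_mul, entCond_eq]
        _ = nml (μ.dist B b) + μ.dist B b * μ.entCond A (fun ω => B ω = b) := by
            rw [distCond_sum μ A _ hpos]; ring
  calc ∑ b, ∑ a, nml (μ.dist (fun ω => (A ω, B ω)) (a, b))
      = ∑ b, (nml (μ.dist B b) + μ.dist B b * μ.entCond A (fun ω => B ω = b)) :=
        Finset.sum_congr rfl fun b _ => key b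
    _ = μ.H B + ∑ b, μ.dist B b * μ.entCond A (fun ω => B ω = b) := by
        rw [Finset.sum_add_distrib, H_eq]

end Stmt3Aux

namespace Stmt3Aux

def G (g : Bool × Bool → Bool) (f' : Bool → Bool × Bool) (s : Bool × Bool) : Bool × Bool :=
  ((f' (g s)).1, xor (f' (g s)).2 (if (f' (g s)).1 then s.2 else s.1))

lemma key1 (g : Bool × Bool → Bool) (f' : Bool → Bool × Bool)
    (hc : ∀ s s' : Bool × Bool, G g f' s = G g f' s') :
    ∃ a d : Bool, (∀ s, g s = xor d (if a then s.2 else s.1)) ∧ (∀ t, (f' t).1 = a) := by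
  revert hc; revert g f'; decide

lemma key2 (a d a' d' : Bool)
    (hh : ∀ s : Bool × Bool, xor d (if a then s.2 else s.1) = xor d' (if a' then s.2 else s.1)) :
    a = a' := by revert hh; revert a d a' d'; decide

end Stmt3Aux

open Stmt3Aux


/-- For the binary two-component channel `Y = (A, B ⊕ S⁽ᴬ⁾)` with state
`S` uniform on `{0,1}²` and one-bit assistance, for any joint distribution of the
admissible form (`S` independent of `(U,V)`, `T` a function of `(V,S)`, `X` a function
of `(U,V,T)`), it is impossible that `I(U;X|V,T) = 2` and `I(U,V;Y) = 2` both hold;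
consequently `min{I(UV;Y), I(U;X|VT)} < 2`. -/
theorem stmt3 {Ω 𝒰 𝒱 : Type} [Fintype Ω] [Fintype 𝒰] [Fintype 𝒱]
    (μ : FinProb Ω) (S : Ω → Bool × Bool) (U : Ω → 𝒰) (V : Ω → 𝒱)
    (T : Ω → Bool) (X : Ω → Bool × Bool) (Y : Ω → Bool × Bool)
    (hS : ∀ s, μ.dist S s = 1 / 4)
    (hSindep : ∀ s u v, μ.pr (fun ω => S ω = s ∧ U ω = u ∧ V ω = v)
        = μ.dist S s * μ.pr (fun ω => U ω = u ∧ V ω = v))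
    (h : 𝒱 → Bool × Bool → Bool) (hT : ∀ ω, T ω = h (V ω) (S ω))
    (f : 𝒰 → 𝒱 → Bool → Bool × Bool) (hX : ∀ ω, X ω = f (U ω) (V ω) (T ω))
    (hY : ∀ ω, Y ω = ((X ω).1, xor (X ω).2 (if (X ω).1 then (S ω).2 else (S ω).1))) :
    ¬(μ.cmi U X (fun ω => (V ω, T ω)) = 2 ∧ μ.mi (fun ω => (U ω, V ω)) Y = 2) ∧
    min (μ.mi (fun ω => (U ω, V ω)) Y) (μ.cmi U X (fun ω => (V ω, T ω))) < 2 := by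
  classical
  set Z : Ω → 𝒱 × Bool := fun ω => (V ω, T ω) with hZdef
  set W : Ω → 𝒰 × 𝒱 := fun ω => (U ω, V ω) with hWdef
  have hlogb4 : Real.logb 2 ((Fintype.card (Bool × Bool) : ℕ) : ℝ) = 2 := by
    rw [show ((Fintype.card (Bool × Bool) : ℕ) : ℝ) = 2 ^ (2 : ℕ) by norm_num [Fintype.card_prod],
      Real.logb_pow, Real.logb_self_eq_one (by norm_num)]
    norm_num
  -- cmi = sum over z of p_z * H(X | Z = z)
  have hUXZ : μ.H (fun ω => (U ω, X ω, Z ω)) = μ.H (fun ω => (U ω, Z ω)) := by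
    have hinj : Function.Injective
        (fun p : 𝒰 × (𝒱 × Bool) => (p.1, f p.1 p.2.1 p.2.2, p.2)) := by
      intro p q hpq
      have h1 := congrArg Prod.fst hpq
      have h2 := congrArg (fun r => r.2.2) hpq
      exact Prod.ext h1 h2
    have heq : (fun ω => (U ω, X ω, Z ω))
        = fun ω => (fun p : 𝒰 × (𝒱 × Bool) => (p.1, f p.1 p.2.1 p.2.2, p.2)) (U ω, Z ω) := by
      funext ω
      simp only [hZdef, hX ω]
    rw [heq]
    exact H_comap μ (fun ω => (U ω, Z ω)) _ hinj
  have hcmi : μ.cmi U X Z = ∑ z, μ.dist Z z * μ.entCond X (fun ω => Z ω = z) := by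
    have hd := decomp μ X Z
    unfold FinProb.cmi
    rw [hUXZ]
    have : μ.H2 U Z = μ.H (fun ω => (U ω, Z ω)) := rfl
    rw [← this]
    unfold FinProb.H2 at hd ⊢
    linarith
  -- mi = H Y - sum over w of p_w * H(Y | W = w)
  have hswap : μ.H2 W Y = μ.H2 Y W := by
    have : (fun ω => (W ω, Y ω)) = fun ω => Prod.swap (Y ω, W ω) := rfl
    unfold FinProb.H2
    rw [this]
    exact H_comap μ (fun ω => (Y ω, W ω)) Prod.swap Prod.swap_injective
  have hmi : μ.mi W Y = μ.H Y - ∑ w, μ.dist W w * μ.entCond Y (fun ω => W ω = w) := by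
    have hd := decomp μ Y W
    unfold FinProb.mi
    rw [hswap]
    unfold FinProb.H2 at hd
    unfold FinProb.H2
    linarith
  -- bounds
  have hdistZ : ∑ z, μ.dist Z z = 1 := dist_sum μ Z
  have hHz_le : ∀ z, μ.dist Z z * μ.entCond X (fun ω => Z ω = z) ≤ μ.dist Z z * 2 := by
    intro z
    rcases lt_or_eq_of_le (dist_nonneg' μ Z z) with hz | hz
    · apply mul_le_mul_of_nonneg_left _ (le_of_lt hz)
      rw [entCond_eq]
      have := sum_nml_le (μ.distCond X (fun ω => Z ω = z))
        (distCond_nonneg μ X _) (distCond_sum μ X _ hz)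
      rw [hlogb4] at this
      exact this
    · rw [← hz]; simp
  have hcmi_le : μ.cmi U X Z ≤ 2 := by
    rw [hcmi]
    calc ∑ z, μ.dist Z z * μ.entCond X (fun ω => Z ω = z)
        ≤ ∑ z, μ.dist Z z * 2 := Finset.sum_le_sum fun z _ => hHz_le z
      _ = 2 := by rw [← Finset.sum_mul, hdistZ, one_mul]
  have hHY_le : μ.H Y ≤ 2 := by
    rw [H_eq]
    have := sum_nml_le (μ.dist Y) (dist_nonneg' μ Y) (dist_sum μ Y)
    rw [hlogb4] at this
    exact this
  have hterm_nonneg : ∀ w, 0 ≤ μ.dist W w * μ.entCond Y (fun ω => W ω = w) :=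
    fun w => mul_nonneg (dist_nonneg' μ W w) (entCond_nonneg μ Y _)
  have hmi_le : μ.mi W Y ≤ 2 := by
    rw [hmi]
    have : 0 ≤ ∑ w, μ.dist W w * μ.entCond Y (fun ω => W ω = w) :=
      Finset.sum_nonneg fun w _ => hterm_nonneg w
    linarith
  -- the impossibility
  have hmain : ¬(μ.cmi U X Z = 2 ∧ μ.mi W Y = 2) := by
    rintro ⟨h1, h2⟩
    -- from mi = 2 : Y is a.s. constant given W = w whenever dist W w > 0
    have hsum0 : ∑ w, μ.dist W w * μ.entCond Y (fun ω => W ω = w) = 0 := by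
      rw [hmi] at h2
      have h0 : 0 ≤ ∑ w, μ.dist W w * μ.entCond Y (fun ω => W ω = w) :=
        Finset.sum_nonneg fun w _ => hterm_nonneg w
      linarith
    have hYdet : ∀ w, 0 < μ.dist W w → μ.entCond Y (fun ω => W ω = w) = 0 := by
      intro w hw
      have := (Finset.sum_eq_zero_iff_of_nonneg (fun w _ => hterm_nonneg w)).mp hsum0
        w (Finset.mem_univ w)
      rcases mul_eq_zero.mp this with h' | h'
      · exact absurd h' (ne_of_gt hw)
      · exact h'
    -- key structural fact for every (u,v) of positive probability
    have hkey : ∀ u v, 0 < μ.dist W (u, v) →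
        ∃ a d : Bool, (∀ s, h v s = xor d (if a then s.2 else s.1))
          ∧ (∀ t, (f u v t).1 = a) := by
      intro u v huv
      apply key1 (h v) (f u v)
      intro s s'
      -- each value G (h v) (f u v) s has conditional probability ≥ 1/4 > 0
      have hval : ∀ s₀ : Bool × Bool,
          0 < μ.distCond Y (fun ω => W ω = (u, v)) (G (h v) (f u v) s₀) := by
        intro s₀
        have hle : μ.pr (fun ω => S ω = s₀ ∧ U ω = u ∧ V ω = v)
            ≤ μ.pr (fun ω => Y ω = G (h v) (f u v) s₀ ∧ W ω = (u, v)) := by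
          apply pr_mono
          rintro ω ⟨hs, hu, hv⟩
          constructor
          · rw [hY ω, hX ω, hT ω, hu, hv, hs]
            rfl
          · exact Prod.ext hu hv
        have hpw : μ.pr (fun ω => U ω = u ∧ V ω = v) = μ.dist W (u, v) := by
          apply pr_congr
          intro ω
          simp [hWdef, Prod.ext_iff]
        have hq : μ.pr (fun ω => S ω = s₀ ∧ U ω = u ∧ V ω = v)
            = (1 / 4) * μ.dist W (u, v) := by
          rw [hSindep s₀ u v, hS s₀, hpw]
        have hprW : μ.pr (fun ω => W ω = (u, v)) = μ.dist W (u, v) := rfl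
        unfold FinProb.distCond FinProb.cpr
        rw [hprW]
        apply div_pos _ huv
        calc (0 : ℝ) < (1 / 4) * μ.dist W (u, v) := by positivity
          _ = μ.pr (fun ω => S ω = s₀ ∧ U ω = u ∧ V ω = v) := hq.symm
          _ ≤ _ := hle
      have hent := hYdet (u, v) huv
      rw [entCond_eq] at hent
      exact eq_of_sum_nml_zero (μ.distCond Y (fun ω => W ω = (u, v)))
        (distCond_nonneg μ Y _) (distCond_sum μ Y _ huv) hent (hval s) (hval s')
    -- from cmi = 2 : H(X|Z=z) = 2 for every z of positive probability
    have hsum2 : ∑ z, (μ.dist Z z * 2 - μ.dist Z z * μ.entCond X (fun ω => Z ω = z)) = 0 := by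
      rw [Finset.sum_sub_distrib, ← hcmi, h1, ← Finset.sum_mul, hdistZ]
      ring
    have hXfull : ∀ z, 0 < μ.dist Z z → μ.entCond X (fun ω => Z ω = z) = 2 := by
      intro z hz
      have := (Finset.sum_eq_zero_iff_of_nonneg
        (fun z _ => sub_nonneg.mpr (hHz_le z))).mp hsum2 z (Finset.mem_univ z)
      have h2' : μ.dist Z z * 2 = μ.dist Z z * μ.entCond X (fun ω => Z ω = z) := by linarith
      have := mul_left_cancel₀ (ne_of_gt hz) h2'
      linarith
    -- find a z of positive probability
    have hexz : ∃ z, 0 < μ.dist Z z := by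
      by_contra hc
      push_neg at hc
      have : ∑ z, μ.dist Z z ≤ 0 :=
        Finset.sum_nonpos fun z _ => hc z
      rw [hdistZ] at this; linarith
    obtain ⟨⟨v, t⟩, hz⟩ := hexz
    -- a witness ω₀ for positivity, giving u₀ with dist W (u₀, v) > 0
    obtain ⟨ω₀, hω₀p, hω₀z⟩ := pr_pos_elim μ hz
    have hV₀ : V ω₀ = v := congrArg Prod.fst hω₀z
    have hW₀ : 0 < μ.dist W (U ω₀, v) := by
      apply pr_pos_of_witness μ ω₀ hω₀p
      exact Prod.ext rfl hV₀
    obtain ⟨a, d, hgd, _⟩ := hkey (U ω₀) v hW₀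
    -- every x in the conditional support of X given Z = (v,t) has first coord a
    have hsupp : ∀ x : Bool × Bool,
        0 < μ.distCond X (fun ω => Z ω = (v, t)) x → x.1 = a := by
      intro x hx
      have hnum : 0 < μ.pr (fun ω => X ω = x ∧ Z ω = (v, t)) := by
        by_contra hc
        push_neg at hc
        have h0 : μ.pr (fun ω => X ω = x ∧ Z ω = (v, t)) = 0 :=
          le_antisymm hc (pr_nonneg μ _)
        unfold FinProb.distCond FinProb.cpr at hx
        rw [h0, zero_div] at hx
        exact lt_irrefl 0 hx
      obtain ⟨ω₁, hω₁p, hω₁x, hω₁z⟩ := pr_pos_elim μ hnum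
      have hV₁ : V ω₁ = v := congrArg Prod.fst hω₁z
      have hT₁ : T ω₁ = t := congrArg Prod.snd hω₁z
      have hW₁ : 0 < μ.dist W (U ω₁, v) := by
        apply pr_pos_of_witness μ ω₁ hω₁p
        exact Prod.ext rfl hV₁
      obtain ⟨a₁, d₁, hgd₁, hfa₁⟩ := hkey (U ω₁) v hW₁
      have haa : a₁ = a := by
        apply key2 a₁ d₁ a d
        intro s
        rw [← hgd₁ s, ← hgd s]
      have hxval : x = f (U ω₁) v t := by
        rw [← hω₁x, hX ω₁, hV₁, hT₁]
      rw [hxval, hfa₁ t, haa]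
    -- contradiction: H(X|Z=(v,t)) = 2 but support has ≤ 2 elements
    have hent2 := hXfull (v, t) hz
    have hle1 : μ.entCond X (fun ω => Z ω = (v, t)) ≤ 1 := by
      rw [entCond_eq]
      apply sum_nml_le_one_of_pair _ (distCond_nonneg μ X _) (distCond_sum μ X _ hz)
        (a, false) (a, true) (by simp)
      intro x hx
      have h1' := hsupp x hx
      rcases x with ⟨x1, x2⟩
      simp only at h1'
      subst h1'
      cases x2
      · left; rfl
      · right; rfl
    rw [hent2] at hle1
    linarith
  refine ⟨hmain, ?_⟩
  rcases lt_or_eq_of_le hmi_le with hlt | heq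
  · exact lt_of_le_of_lt (min_le_left _ _) hlt
  · have : μ.cmi U X Z ≠ 2 := fun hc => hmain ⟨hc, heq⟩
    have hlt : μ.cmi U X Z < 2 := lt_of_le_of_ne hcmi_le this
    exact lt_of_le_of_lt (min_le_right _ _) hlt
end
end

section
/- For the binary two-component channel Y = (A, B ⊕ S⁽ᴬ⁾) with S = (S⁽⁰⁾, S⁽¹⁾) uniform on {0,1}², define: U = (A, Ũ) uniform on {0,1}², σ Bernoulli(α) independent of U and S, Ṽ = A if σ=1 and Ṽ = 0 if σ=0, V = (Ṽ, σ), T = S⁽Ṽ⁾, and X = (A, Ũ ⊕ T). Then I(U,V; Y) ≥ (α + 3)/2 bits. -/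
open scoped BigOperators Classical
open Real Finset

noncomputable section

abbrev Wt := Bool × Bool × Bool × (Bool × Bool)

set_option maxHeartbeats 1000000 in
lemma pr_comp {Ω : Type} [Fintype Ω] (μ : FinProb Ω) (A Ut σv : Ω → Bool) (S : Ω → Bool × Bool)
    (Q : Wt → Prop) :
    μ.pr (fun ω => Q (A ω, Ut ω, σv ω, S ω))
      = ∑ w : Wt, if Q w then μ.pr (fun ω => (A ω, Ut ω, σv ω, S ω) = w) else 0 := by
  classical
  have h1 : ∀ w : Wt, (if Q w then μ.pr (fun ω => (A ω, Ut ω, σv ω, S ω) = w) else 0)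
      = ∑ ω, if (A ω, Ut ω, σv ω, S ω) = w ∧ Q w then μ.p ω else 0 := by
    intro w
    unfold FinProb.pr
    split_ifs with h
    · exact Finset.sum_congr rfl (fun ω _ => by simp [h])
    · symm; apply Finset.sum_eq_zero; intro ω _; rw [if_neg]; tauto
  rw [Finset.sum_congr rfl (fun w _ => h1 w), Finset.sum_comm]
  unfold FinProb.pr
  refine Finset.sum_congr rfl (fun ω _ => ?_)
  have h2 : ∀ w : Wt, (if (A ω, Ut ω, σv ω, S ω) = w ∧ Q w then μ.p ω else 0)
      = if (A ω, Ut ω, σv ω, S ω) = w then (if Q w then μ.p ω else 0) else 0 := by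
    intro w; split_ifs with h hq <;> first | rfl | (exfalso; tauto)
  rw [Finset.sum_congr rfl (fun w _ => h2 w), Finset.sum_ite_eq]
  simp

lemma pr_congr {Ω : Type} [Fintype Ω] (μ : FinProb Ω) {E E' : Ω → Prop}
    (h : ∀ ω, E ω ↔ E' ω) : μ.pr E = μ.pr E' := by
  unfold FinProb.pr
  refine Finset.sum_congr rfl (fun ω _ => ?_)
  by_cases hE : E ω
  · rw [if_pos hE, if_pos ((h ω).mp hE)]
  · rw [if_neg hE, if_neg (fun h' => hE ((h ω).mpr h'))]

def qw (α : ℝ) (w : Wt) : ℝ := 1 / 4 * (if w.2.2.1 then α else 1 - α) * (1 / 4)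

set_option maxHeartbeats 1000000 in
lemma H_comp {Ω : Type} [Fintype Ω] (μ : FinProb Ω) (α : ℝ) (A Ut σv : Ω → Bool)
    (S : Ω → Bool × Bool)
    (hjoint : ∀ (a u b : Bool) (s : Bool × Bool),
      μ.pr (fun ω => A ω = a ∧ Ut ω = u ∧ σv ω = b ∧ S ω = s)
        = 1 / 4 * (if b then α else 1 - α) * (1 / 4))
    {β : Type} [Fintype β] (F : Wt → β) :
    μ.H (fun ω => F (A ω, Ut ω, σv ω, S ω))
      = ∑ x : β, -(∑ w : Wt, if F w = x then qw α w else 0)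
          * Real.logb 2 (∑ w : Wt, if F w = x then qw α w else 0) := by
  classical
  unfold FinProb.H FinProb.dist
  refine Finset.sum_congr rfl (fun x _ => ?_)
  have key : μ.pr (fun ω => F (A ω, Ut ω, σv ω, S ω) = x)
      = ∑ w : Wt, if F w = x then qw α w else 0 := by
    rw [pr_comp μ A Ut σv S (fun w => F w = x)]
    refine Finset.sum_congr rfl (fun w _ => ?_)
    by_cases h : F w = x
    · rw [if_pos h, if_pos h,
        pr_congr μ (E' := fun ω => A ω = w.1 ∧ Ut ω = w.2.1 ∧ σv ω = w.2.2.1 ∧ S ω = w.2.2.2)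
          (fun ω => by constructor <;> intro h' <;> simp_all [Prod.ext_iff]),
        hjoint]
      rfl
    · rw [if_neg h, if_neg h]
  rw [key]


def FU : Wt → (Bool × Bool) × (Bool × Bool) :=
  fun w => ((w.1, w.2.1), (if w.2.2.1 then w.1 else false, w.2.2.1))
def FY : Wt → Bool × Bool :=
  fun w => (w.1, xor (xor w.2.1 (if (if w.2.2.1 then w.1 else false) then w.2.2.2.2 else w.2.2.2.1))
    (if w.1 then w.2.2.2.2 else w.2.2.2.1))
def FP : Wt → ((Bool × Bool) × (Bool × Bool)) × (Bool × Bool) := fun w => (FU w, FY w)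


set_option maxHeartbeats 2000000 in
/-- In the explicit construction (`U = (A,Ũ)` uniform, `σ ~ Bernoulli(α)`,
`Ṽ = A` if `σ = 1` else `0`, `V = (Ṽ,σ)`, `T = S⁽Ṽ⁾`, `X = (A, Ũ ⊕ T)`, channel output
`Y = (A, (Ũ ⊕ T) ⊕ S⁽ᴬ⁾)`), one has `I(U,V; Y) ≥ (α + 3)/2` bits. -/
theorem stmt4 {Ω : Type} [Fintype Ω] (μ : FinProb Ω) (α : ℝ) (hα : α ∈ Set.Icc (0 : ℝ) 1)
    (A Ut σv : Ω → Bool) (S : Ω → Bool × Bool)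
    (hjoint : ∀ (a u b : Bool) (s : Bool × Bool),
      μ.pr (fun ω => A ω = a ∧ Ut ω = u ∧ σv ω = b ∧ S ω = s)
        = 1 / 4 * (if b then α else 1 - α) * (1 / 4)) :
    let Vt : Ω → Bool := fun ω => if σv ω then A ω else false
    let T : Ω → Bool := fun ω => if Vt ω then (S ω).2 else (S ω).1
    let Y : Ω → Bool × Bool :=
      fun ω => (A ω, xor (xor (Ut ω) (T ω)) (if A ω then (S ω).2 else (S ω).1))
    (α + 3) / 2 ≤ μ.mi (fun ω => ((A ω, Ut ω), (Vt ω, σv ω))) Y := by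
  intro Vt T Y
  have eX : (fun ω => ((A ω, Ut ω), (Vt ω, σv ω))) = fun ω => FU (A ω, Ut ω, σv ω, S ω) := rfl
  have eY : Y = fun ω => FY (A ω, Ut ω, σv ω, S ω) := rfl
  have eP : (fun ω => (((A ω, Ut ω), (Vt ω, σv ω)), Y ω)) = fun ω => FP (A ω, Ut ω, σv ω, S ω) := rfl
  rw [FinProb.mi, FinProb.H2, eP, eX, eY, H_comp μ α A Ut σv S hjoint FU,
    H_comp μ α A Ut σv S hjoint FY, H_comp μ α A Ut σv S hjoint FP]
  simp only [Fintype.sum_prod_type, Fintype.sum_bool, FU, FY, FP, qw, Prod.mk.injEq]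
  norm_num
  ring_nf
  have hlog2 : Real.log 2 ≠ 0 := ne_of_gt (Real.log_pos (by norm_num))
  have h14 : Real.logb 2 ((1:ℝ)/4) = -2 := by
    rw [show (1/4:ℝ) = 4⁻¹ by norm_num, Real.logb, Real.log_inv, show (4:ℝ) = 2^2 by norm_num,
      Real.log_pow]
    field_simp
    norm_num
  by_cases hα1 : α = 1
  · subst hα1
    norm_num [h14, Real.logb_zero]
  · have hone : (1/4 + α * (-1/4) : ℝ) ≠ 0 := fun h => hα1 (by linarith)
    have hself : Real.logb 2 2 = 1 := by rw [Real.logb, div_self hlog2]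
    have h8 : Real.logb 2 (1/8 + α * (-1/8)) = Real.logb 2 (1/4 + α * (-1/4)) - 1 := by
      rw [show (1/8 + α * (-1/8) : ℝ) = (1/4 + α * (-1/4))/2 by ring,
        Real.logb_div hone two_ne_zero, hself]
    rw [h8, h14]
    ring_nf
    linarith
end
end

section
/- In the setting of the previous construction (U = (A,Ũ) uniform on {0,1}², σ ~ Bernoulli(α) independent of U and the uniform state S, Ṽ = A·σ, V = (Ṽ,σ), T = S⁽Ṽ⁾, X = (A, Ũ ⊕ T)), the conditional mutual information satisfies I(U; X | V, T) = 2 − α bits. -/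
open scoped BigOperators Classical
open Real Finset

noncomputable section

private lemma key_lemma {Ω : Type} [Fintype Ω] (μ : FinProb Ω) (α : ℝ)
    (A Ut σv : Ω → Bool) (S : Ω → Bool × Bool)
    (hjoint : ∀ (a u b : Bool) (s : Bool × Bool),
      μ.pr (fun ω => A ω = a ∧ Ut ω = u ∧ σv ω = b ∧ S ω = s)
        = 1 / 4 * (if b then α else 1 - α) * (1 / 4))
    (P : Bool → Bool → Bool → Bool × Bool → Prop) :
    μ.pr (fun ω => P (A ω) (Ut ω) (σv ω) (S ω))
      = ∑ q : Bool × Bool × Bool × (Bool × Bool),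
          if P q.1 q.2.1 q.2.2.1 q.2.2.2 then 1 / 4 * (if q.2.2.1 then α else 1 - α) * (1 / 4) else 0 := by
  have step : ∀ ω, (if P (A ω) (Ut ω) (σv ω) (S ω) then μ.p ω else 0)
      = ∑ q : Bool × Bool × Bool × (Bool × Bool),
          if (A ω, Ut ω, σv ω, S ω) = q then
            (if P q.1 q.2.1 q.2.2.1 q.2.2.2 then μ.p ω else 0) else 0 := by
    intro ω
    rw [Finset.sum_ite_eq]
    simp
  unfold FinProb.pr
  beta_reduce
  simp only [step]
  rw [Finset.sum_comm]
  refine Finset.sum_congr rfl (fun q _ => ?_)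
  have : ∀ ω, (if (A ω, Ut ω, σv ω, S ω) = q then
            (if P q.1 q.2.1 q.2.2.1 q.2.2.2 then μ.p ω else 0) else 0)
      = (if P q.1 q.2.1 q.2.2.1 q.2.2.2 then
          (if A ω = q.1 ∧ Ut ω = q.2.1 ∧ σv ω = q.2.2.1 ∧ S ω = q.2.2.2 then μ.p ω else 0) else 0) := by
    intro ω
    by_cases h : P q.1 q.2.1 q.2.2.1 q.2.2.2 <;> simp [h, Prod.ext_iff]
  simp only [this]
  by_cases h : P q.1 q.2.1 q.2.2.1 q.2.2.2
  · simp only [h, if_true]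
    rw [← hjoint q.1 q.2.1 q.2.2.1 q.2.2.2]
    simp only [FinProb.pr]
    exact Finset.sum_congr rfl fun x _ => by convert rfl
  · simp [h]

private lemma H_formula {Ω : Type} [Fintype Ω] (μ : FinProb Ω) (α : ℝ)
    (A Ut σv : Ω → Bool) (S : Ω → Bool × Bool)
    (hjoint : ∀ (a u b : Bool) (s : Bool × Bool),
      μ.pr (fun ω => A ω = a ∧ Ut ω = u ∧ σv ω = b ∧ S ω = s)
        = 1 / 4 * (if b then α else 1 - α) * (1 / 4))
    {β : Type} [Fintype β] (f : Bool → Bool → Bool → Bool × Bool → β) :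
    μ.H (fun ω => f (A ω) (Ut ω) (σv ω) (S ω))
      = ∑ x : β,
          -(∑ q : Bool × Bool × Bool × (Bool × Bool),
              if f q.1 q.2.1 q.2.2.1 q.2.2.2 = x then 1 / 4 * (if q.2.2.1 then α else 1 - α) * (1 / 4) else 0)
          * Real.logb 2
            (∑ q : Bool × Bool × Bool × (Bool × Bool),
              if f q.1 q.2.1 q.2.2.1 q.2.2.2 = x then 1 / 4 * (if q.2.2.1 then α else 1 - α) * (1 / 4) else 0) := by
  unfold FinProb.H
  refine Finset.sum_congr rfl fun x _ => ?_
  have e : μ.dist (fun ω => f (A ω) (Ut ω) (σv ω) (S ω)) x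
      = ∑ q : Bool × Bool × Bool × (Bool × Bool),
          if f q.1 q.2.1 q.2.2.1 q.2.2.2 = x then 1 / 4 * (if q.2.2.1 then α else 1 - α) * (1 / 4) else 0 :=
    key_lemma μ α A Ut σv S hjoint (fun a u b s => f a u b s = x)
  rw [e]

private lemma log_helper1 (x : ℝ) :
    x * Real.logb 2 (x / 8) = x * Real.logb 2 (x / 2) - 2 * x := by
  rcases eq_or_ne x 0 with h | h
  · simp [h]
  · have h4 : Real.logb 2 (4 : ℝ) = 2 := by
      rw [show (4:ℝ) = 2 ^ (2:ℕ) by norm_num, Real.logb_pow]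
      simp
    rw [show x / 8 = (x / 2) / 4 by ring,
      Real.logb_div (div_ne_zero h two_ne_zero) (by norm_num), h4]
    ring

private lemma log_helper2 (x : ℝ) :
    x * Real.logb 2 (x / 8) = x * Real.logb 2 (x / 4) - x := by
  rcases eq_or_ne x 0 with h | h
  · simp [h]
  · have h2 : Real.logb 2 (2 : ℝ) = 1 := by simp
    rw [show x / 8 = (x / 4) / 2 by ring,
      Real.logb_div (div_ne_zero h (by norm_num)) (by norm_num), h2]
    ring

set_option maxHeartbeats 2000000 in
/-- In the same construction (`U = (A,Ũ)` uniform, `σ ~ Bernoulli(α)`,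
`Ṽ = A·σ`, `V = (Ṽ,σ)`, `T = S⁽Ṽ⁾`, `X = (A, Ũ ⊕ T)`), one has
`I(U; X | V, T) = 2 − α` bits. -/
theorem stmt5 {Ω : Type} [Fintype Ω] (μ : FinProb Ω) (α : ℝ) (hα : α ∈ Set.Icc (0 : ℝ) 1)
    (A Ut σv : Ω → Bool) (S : Ω → Bool × Bool)
    (hjoint : ∀ (a u b : Bool) (s : Bool × Bool),
      μ.pr (fun ω => A ω = a ∧ Ut ω = u ∧ σv ω = b ∧ S ω = s)
        = 1 / 4 * (if b then α else 1 - α) * (1 / 4)) :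
    let Vt : Ω → Bool := fun ω => if σv ω then A ω else false
    let T : Ω → Bool := fun ω => if Vt ω then (S ω).2 else (S ω).1
    let X : Ω → Bool × Bool := fun ω => (A ω, xor (Ut ω) (T ω))
    μ.cmi (fun ω => (A ω, Ut ω)) X (fun ω => ((Vt ω, σv ω), T ω)) = 2 - α := by
  intro Vt T X
  have hZ : μ.H (fun ω => (fun (a u b : Bool) (s : Bool × Bool) =>
        ((if b then a else false, b), if (if b then a else (false:Bool)) then s.2 else s.1))
        (A ω) (Ut ω) (σv ω) (S ω))
      = -((1 - α) * Real.logb 2 ((1 - α) / 2)) - α * Real.logb 2 (α / 4) := by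
    rw [H_formula μ α A Ut σv S hjoint (fun (a u b : Bool) (s : Bool × Bool) =>
        ((if b then a else false, b), if (if b then a else (false:Bool)) then s.2 else s.1))]
    simp only [Fintype.sum_prod_type, Fintype.sum_bool]
    norm_num [Prod.mk.injEq]
    ring_nf
  have hUZ : μ.H (fun ω => (fun (a u b : Bool) (s : Bool × Bool) =>
        ((a, u), ((if b then a else false, b), if (if b then a else (false:Bool)) then s.2 else s.1)))
        (A ω) (Ut ω) (σv ω) (S ω))
      = -((1 - α) * Real.logb 2 ((1 - α) / 8)) - α * Real.logb 2 (α / 8) := by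
    rw [H_formula μ α A Ut σv S hjoint (fun (a u b : Bool) (s : Bool × Bool) =>
        ((a, u), ((if b then a else false, b), if (if b then a else (false:Bool)) then s.2 else s.1)))]
    simp only [Fintype.sum_prod_type, Fintype.sum_bool]
    norm_num [Prod.mk.injEq]
    ring_nf
  have hXZ : μ.H (fun ω => (fun (a u b : Bool) (s : Bool × Bool) =>
        ((a, xor u (if (if b then a else (false:Bool)) then s.2 else s.1)),
          ((if b then a else false, b), if (if b then a else (false:Bool)) then s.2 else s.1)))
        (A ω) (Ut ω) (σv ω) (S ω))
      = -((1 - α) * Real.logb 2 ((1 - α) / 8)) - α * Real.logb 2 (α / 8) := by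
    rw [H_formula μ α A Ut σv S hjoint (fun (a u b : Bool) (s : Bool × Bool) =>
        ((a, xor u (if (if b then a else (false:Bool)) then s.2 else s.1)),
          ((if b then a else false, b), if (if b then a else (false:Bool)) then s.2 else s.1)))]
    simp only [Fintype.sum_prod_type, Fintype.sum_bool]
    norm_num [Prod.mk.injEq]
    ring_nf
  have hUXZ : μ.H (fun ω => (fun (a u b : Bool) (s : Bool × Bool) =>
        ((a, u), (a, xor u (if (if b then a else (false:Bool)) then s.2 else s.1)),
          ((if b then a else false, b), if (if b then a else (false:Bool)) then s.2 else s.1)))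
        (A ω) (Ut ω) (σv ω) (S ω))
      = -((1 - α) * Real.logb 2 ((1 - α) / 8)) - α * Real.logb 2 (α / 8) := by
    rw [H_formula μ α A Ut σv S hjoint (fun (a u b : Bool) (s : Bool × Bool) =>
        ((a, u), (a, xor u (if (if b then a else (false:Bool)) then s.2 else s.1)),
          ((if b then a else false, b), if (if b then a else (false:Bool)) then s.2 else s.1)))]
    simp only [Fintype.sum_prod_type, Fintype.sum_bool]
    norm_num [Prod.mk.injEq]
    ring_nf
  calc μ.cmi (fun ω => (A ω, Ut ω)) X (fun ω => ((Vt ω, σv ω), T ω))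
      = μ.H (fun ω => (fun (a u b : Bool) (s : Bool × Bool) =>
          ((a, u), ((if b then a else false, b), if (if b then a else (false:Bool)) then s.2 else s.1)))
          (A ω) (Ut ω) (σv ω) (S ω))
        + μ.H (fun ω => (fun (a u b : Bool) (s : Bool × Bool) =>
          ((a, xor u (if (if b then a else (false:Bool)) then s.2 else s.1)),
            ((if b then a else false, b), if (if b then a else (false:Bool)) then s.2 else s.1)))
          (A ω) (Ut ω) (σv ω) (S ω))
        - μ.H (fun ω => (fun (a u b : Bool) (s : Bool × Bool) =>
          ((a, u), (a, xor u (if (if b then a else (false:Bool)) then s.2 else s.1)),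
            ((if b then a else false, b), if (if b then a else (false:Bool)) then s.2 else s.1)))
          (A ω) (Ut ω) (σv ω) (S ω))
        - μ.H (fun ω => (fun (a u b : Bool) (s : Bool × Bool) =>
          ((if b then a else false, b), if (if b then a else (false:Bool)) then s.2 else s.1))
          (A ω) (Ut ω) (σv ω) (S ω)) := rfl
    _ = 2 - α := by
        rw [hUZ, hXZ, hUXZ, hZ]
        linarith [log_helper1 (1 - α), log_helper2 α]
end
end

section
/- Let M, X, S, Y, T be random variables (X = X^n, S = S^n, Y^n sequences) such that M — (Xⁿ, Sⁿ) — Yⁿ is a Markov chain, Sⁿ is independent of M, for each i the symbol T_i is a deterministic function of (X^{i−1}, S^i), and X_i is a deterministic function of (M, T^i). Then I(M; Yⁿ) ≤ Σ_{i=1}^n I(M, Y^{i−1}; X_i | S^{i−1}, X^{i−1}, T_i). -/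
open scoped BigOperators Classical
open Real Finset

noncomputable section

namespace FinProb

variable {Ω : Type*} [Fintype Ω] (μ : FinProb Ω)

lemma pr_congr {E F : Ω → Prop} (h : ∀ ω, E ω ↔ F ω) : μ.pr E = μ.pr F := by
  have : E = F := funext fun ω => propext (h ω)
  rw [this]

lemma pr_nonneg (E : Ω → Prop) : 0 ≤ μ.pr E := by
  apply Finset.sum_nonneg
  intro ω _
  by_cases h : E ω <;> simp [pr, h, μ.nonneg ω]

lemma pr_mono {E F : Ω → Prop} (h : ∀ ω, E ω → F ω) : μ.pr E ≤ μ.pr F := by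
  apply Finset.sum_le_sum
  intro ω _
  by_cases hE : E ω
  · simp [hE, h ω hE]
  · simp [hE]
    by_cases hF : F ω <;> simp [hF, μ.nonneg ω]

lemma dist_nonneg {α : Type*} [Fintype α] (X : Ω → α) (x : α) : 0 ≤ μ.dist X x :=
  μ.pr_nonneg _

lemma sum_dist {α : Type*} [Fintype α] (X : Ω → α) : ∑ x, μ.dist X x = 1 := by
  unfold dist pr
  rw [Finset.sum_comm]
  rw [← μ.sum_one]
  refine Finset.sum_congr rfl fun ω _ => ?_
  simp [Finset.sum_ite_eq]

lemma dist_le_dist_comp {α β : Type*} [Fintype α] [Fintype β] (V : Ω → α) (g : α → β) (v : α) :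
    μ.dist V v ≤ μ.dist (fun ω => g (V ω)) (g v) :=
  μ.pr_mono fun ω h => by show g (V ω) = g v; rw [h]

lemma dist_comp_sum {α β : Type*} [Fintype α] [Fintype β] (V : Ω → α) (g : α → β)
    (W : Ω → β) (hW : ∀ ω, W ω = g (V ω)) (b : β) :
    μ.dist W b = ∑ a, if g a = b then μ.dist V a else 0 := by
  unfold dist pr
  have key : ∀ a : α, (if g a = b then ∑ ω, if V ω = a then μ.p ω else 0 else 0)
      = ∑ ω, if g a = b ∧ V ω = a then μ.p ω else 0 := by
    intro a; by_cases h : g a = b <;> simp [h]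
  rw [Finset.sum_congr rfl fun a _ => key a, Finset.sum_comm]
  refine Finset.sum_congr rfl fun ω _ => ?_
  rw [Finset.sum_eq_single (V ω) (fun a _ ha => by simp [Ne.symm ha]) (by simp)]
  simp [hW ω]

lemma dist_comp_apply {α β : Type*} [Fintype α] [Fintype β] (X : Ω → α) (e : α → β)
    (he : Function.Injective e) (a : α) :
    μ.dist (fun ω => e (X ω)) (e a) = μ.dist X a :=
  μ.pr_congr fun ω => by
    show e (X ω) = e a ↔ X ω = a
    exact ⟨fun h => he h, fun h => by rw [h]⟩

lemma dist_comp_eq_zero {α β : Type*} [Fintype α] [Fintype β] (X : Ω → α) (e : α → β)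
    (y : β) (hy : ∀ a, e a ≠ y) : μ.dist (fun ω => e (X ω)) y = 0 := by
  unfold dist pr
  apply Finset.sum_eq_zero
  intro ω _
  simp [hy (X ω)]

lemma H_comp_inj {α β : Type*} [Fintype α] [Fintype β] (X : Ω → α) (e : α → β)
    (he : Function.Injective e) : μ.H (fun ω => e (X ω)) = μ.H X := by
  unfold H
  have h0 : ∀ y ∈ (Finset.univ : Finset β), y ∉ Finset.image e Finset.univ →
      -(μ.dist (fun ω => e (X ω)) y) * Real.logb 2 (μ.dist (fun ω => e (X ω)) y) = 0 := by
    intro y _ hy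
    have : μ.dist (fun ω => e (X ω)) y = 0 := by
      apply μ.dist_comp_eq_zero
      intro a h
      exact hy (Finset.mem_image.mpr ⟨a, Finset.mem_univ a, h⟩)
    simp [this]
  rw [← Finset.sum_subset (Finset.subset_univ _) h0,
    Finset.sum_image (fun a _ b _ h => he h)]
  refine Finset.sum_congr rfl fun a _ => ?_
  rw [μ.dist_comp_apply X e he]

lemma H_comp_eq {α β : Type*} [Fintype α] [Fintype β] (V : Ω → α) (g : α → β)
    (W : Ω → β) (hW : ∀ ω, W ω = g (V ω)) :
    μ.H W = ∑ a, -(μ.dist V a) * Real.logb 2 (μ.dist W (g a)) := by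
  unfold H
  have step : ∀ (b : β) (L : ℝ), -(μ.dist W b) * L
      = ∑ a, if g a = b then -(μ.dist V a) * L else 0 := by
    intro b L
    rw [μ.dist_comp_sum V g W hW b, neg_mul, Finset.sum_mul, ← Finset.sum_neg_distrib]
    refine Finset.sum_congr rfl fun a _ => ?_
    by_cases h : g a = b <;> simp [h]
  rw [Finset.sum_congr rfl fun b _ => step b (Real.logb 2 (μ.dist W b)), Finset.sum_comm]
  refine Finset.sum_congr rfl fun a _ => ?_
  simp [Finset.sum_ite_eq]

end FinProb

namespace FinProb

variable {Ω : Type*} [Fintype Ω] (μ : FinProb Ω)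

lemma sum_dist_pair_left {α γ : Type*} [Fintype α] [Fintype γ] (A : Ω → α) (C : Ω → γ) (c : γ) :
    ∑ a, μ.dist (fun ω => (A ω, C ω)) (a, c) = μ.dist C c := by
  unfold dist pr
  rw [Finset.sum_comm]
  refine Finset.sum_congr rfl fun ω _ => ?_
  by_cases h : C ω = c
  · simp [Prod.ext_iff, h, Finset.sum_ite_eq]
  · simp [Prod.ext_iff, h]

lemma cmi_eq_sum {α β γ : Type*} [Fintype α] [Fintype β] [Fintype γ]
    (A : Ω → α) (B : Ω → β) (C : Ω → γ) :
    μ.cmi A B C = ∑ t : α × β × γ,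
      μ.dist (fun ω => (A ω, B ω, C ω)) t *
        (Real.logb 2 (μ.dist (fun ω => (A ω, B ω, C ω)) t)
          + Real.logb 2 (μ.dist C t.2.2)
          - Real.logb 2 (μ.dist (fun ω => (A ω, C ω)) (t.1, t.2.2))
          - Real.logb 2 (μ.dist (fun ω => (B ω, C ω)) (t.2.1, t.2.2))) := by
  have e1 : μ.H2 A C = ∑ t : α × β × γ,
      -(μ.dist (fun ω => (A ω, B ω, C ω)) t) *
        Real.logb 2 (μ.dist (fun ω => (A ω, C ω)) (t.1, t.2.2)) :=
    μ.H_comp_eq (fun ω => (A ω, B ω, C ω)) (fun t => (t.1, t.2.2)) _ (fun ω => rfl)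
  have e2 : μ.H2 B C = ∑ t : α × β × γ,
      -(μ.dist (fun ω => (A ω, B ω, C ω)) t) *
        Real.logb 2 (μ.dist (fun ω => (B ω, C ω)) (t.2.1, t.2.2)) :=
    μ.H_comp_eq (fun ω => (A ω, B ω, C ω)) (fun t => (t.2.1, t.2.2)) _ (fun ω => rfl)
  have e3 : μ.H (fun ω => (A ω, B ω, C ω)) = ∑ t : α × β × γ,
      -(μ.dist (fun ω => (A ω, B ω, C ω)) t) *
        Real.logb 2 (μ.dist (fun ω => (A ω, B ω, C ω)) t) :=
    μ.H_comp_eq (fun ω => (A ω, B ω, C ω)) (fun t => t) _ (fun ω => rfl)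
  have e4 : μ.H C = ∑ t : α × β × γ,
      -(μ.dist (fun ω => (A ω, B ω, C ω)) t) *
        Real.logb 2 (μ.dist C t.2.2) :=
    μ.H_comp_eq (fun ω => (A ω, B ω, C ω)) (fun t => t.2.2) _ (fun ω => rfl)
  unfold cmi
  rw [e1, e2, e3, e4, ← Finset.sum_add_distrib, ← Finset.sum_sub_distrib,
    ← Finset.sum_sub_distrib]
  exact Finset.sum_congr rfl fun t _ => by ring

private lemma key_ineq (p a b c : ℝ) (hp : 0 ≤ p) (ha0 : 0 ≤ a) (hb0 : 0 ≤ b) (hc0 : 0 ≤ c)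
    (hpa : p ≤ a) (hpb : p ≤ b) (hpc : p ≤ c) :
    (p - a * b / c) / Real.log 2
      ≤ p * (Real.logb 2 p + Real.logb 2 c - Real.logb 2 a - Real.logb 2 b) := by
  have hlog2 : 0 < Real.log 2 := Real.log_pos (by norm_num)
  rcases eq_or_lt_of_le hp with h | h
  · rw [← h]
    simp only [zero_mul, zero_sub]
    apply div_nonpos_of_nonpos_of_nonneg _ hlog2.le
    have : 0 ≤ a * b / c := by positivity
    linarith
  · have ha : 0 < a := lt_of_lt_of_le h hpa
    have hb : 0 < b := lt_of_lt_of_le h hpb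
    have hc : 0 < c := lt_of_lt_of_le h hpc
    have hlog : Real.log (a * b / (p * c)) ≤ a * b / (p * c) - 1 :=
      Real.log_le_sub_one_of_pos (by positivity)
    have hsplit : Real.log (a * b / (p * c))
        = Real.log a + Real.log b - Real.log p - Real.log c := by
      rw [Real.log_div (by positivity) (by positivity), Real.log_mul ha.ne' hb.ne',
        Real.log_mul h.ne' hc.ne']
      ring
    have hL : 1 - a * b / (p * c) ≤ Real.log p + Real.log c - Real.log a - Real.log b := by
      linarith [hlog, hsplit.symm.le, hsplit.le]
    have hmul : p * (1 - a * b / (p * c))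
        ≤ p * (Real.log p + Real.log c - Real.log a - Real.log b) :=
      mul_le_mul_of_nonneg_left hL h.le
    have hval : p * (1 - a * b / (p * c)) = p - a * b / c := by
      field_simp
    have final : p - a * b / c ≤ p * (Real.log p + Real.log c - Real.log a - Real.log b) := by
      linarith
    have hrw : p * (Real.logb 2 p + Real.logb 2 c - Real.logb 2 a - Real.logb 2 b)
        = (p * (Real.log p + Real.log c - Real.log a - Real.log b)) / Real.log 2 := by
      simp only [Real.logb]
      ring
    rw [hrw]
    exact (div_le_div_iff_of_pos_right hlog2).mpr final

lemma cmi_nonneg {α β γ : Type*} [Fintype α] [Fintype β] [Fintype γ]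
    (A : Ω → α) (B : Ω → β) (C : Ω → γ) : 0 ≤ μ.cmi A B C := by
  rw [μ.cmi_eq_sum A B C]
  set p3 := μ.dist (fun ω => (A ω, B ω, C ω)) with hp3
  set pAC := μ.dist (fun ω => (A ω, C ω)) with hpAC
  set pBC := μ.dist (fun ω => (B ω, C ω)) with hpBC
  set pC := μ.dist C with hpC
  have hterm : ∀ t : α × β × γ,
      (p3 t - pAC (t.1, t.2.2) * pBC (t.2.1, t.2.2) / pC t.2.2) / Real.log 2
        ≤ p3 t * (Real.logb 2 (p3 t) + Real.logb 2 (pC t.2.2)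
            - Real.logb 2 (pAC (t.1, t.2.2)) - Real.logb 2 (pBC (t.2.1, t.2.2))) := by
    intro t
    have h1 : p3 t ≤ pAC (t.1, t.2.2) := by
      have := μ.dist_le_dist_comp (fun ω => (A ω, B ω, C ω)) (fun u => (u.1, u.2.2)) t
      exact this
    have h2 : p3 t ≤ pBC (t.2.1, t.2.2) := by
      have := μ.dist_le_dist_comp (fun ω => (A ω, B ω, C ω)) (fun u => (u.2.1, u.2.2)) t
      exact this
    have h3 : p3 t ≤ pC t.2.2 := by
      have := μ.dist_le_dist_comp (fun ω => (A ω, B ω, C ω)) (fun u => u.2.2) t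
      exact this
    exact key_ineq _ _ _ _ (μ.dist_nonneg _ t) (μ.dist_nonneg _ _) (μ.dist_nonneg _ _)
      (μ.dist_nonneg _ _) h1 h2 h3
  have hsum : ∑ t : α × β × γ,
      (p3 t - pAC (t.1, t.2.2) * pBC (t.2.1, t.2.2) / pC t.2.2) / Real.log 2
      ≤ ∑ t : α × β × γ, p3 t * (Real.logb 2 (p3 t) + Real.logb 2 (pC t.2.2)
            - Real.logb 2 (pAC (t.1, t.2.2)) - Real.logb 2 (pBC (t.2.1, t.2.2))) :=
    Finset.sum_le_sum fun t _ => hterm t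
  refine le_trans ?_ hsum
  rw [← Finset.sum_div]
  apply div_nonneg _ (Real.log_pos (by norm_num)).le
  rw [Finset.sum_sub_distrib]
  have hone : ∑ t : α × β × γ, p3 t = 1 := μ.sum_dist _
  have hq : ∑ t : α × β × γ, pAC (t.1, t.2.2) * pBC (t.2.1, t.2.2) / pC t.2.2 ≤ 1 := by
    have h1 : ∑ t : α × β × γ, pAC (t.1, t.2.2) * pBC (t.2.1, t.2.2) / pC t.2.2
        = ∑ a : α, ∑ b : β, ∑ c : γ, pAC (a, c) * pBC (b, c) / pC c := by
      rw [Fintype.sum_prod_type]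
      exact Finset.sum_congr rfl fun a _ => by rw [Fintype.sum_prod_type]
    have h2 : ∑ a : α, ∑ b : β, ∑ c : γ, pAC (a, c) * pBC (b, c) / pC c
        = ∑ c : γ, ∑ a : α, ∑ b : β, pAC (a, c) * pBC (b, c) / pC c := by
      have inner : ∀ a : α, (∑ b : β, ∑ c : γ, pAC (a, c) * pBC (b, c) / pC c)
          = ∑ c : γ, ∑ b : β, pAC (a, c) * pBC (b, c) / pC c := fun a => Finset.sum_comm
      rw [Finset.sum_congr rfl fun a _ => inner a]
      exact Finset.sum_comm
    have per : ∀ c : γ, (∑ a : α, ∑ b : β, pAC (a, c) * pBC (b, c) / pC c)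
        = (∑ a : α, pAC (a, c)) * (∑ b : β, pBC (b, c)) / pC c := by
      intro c
      rw [Finset.sum_mul, Finset.sum_div]
      refine Finset.sum_congr rfl fun a _ => ?_
      rw [Finset.mul_sum, Finset.sum_div]
    have hmargA : ∀ c : γ, (∑ a : α, pAC (a, c)) = pC c := fun c =>
      μ.sum_dist_pair_left A C c
    have hmargB : ∀ c : γ, (∑ b : β, pBC (b, c)) = pC c := fun c =>
      μ.sum_dist_pair_left B C c
    rw [h1, h2]
    calc ∑ c : γ, ∑ a : α, ∑ b : β, pAC (a, c) * pBC (b, c) / pC c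
        = ∑ c : γ, pC c * pC c / pC c := by
          refine Finset.sum_congr rfl fun c _ => ?_
          rw [per c, hmargA c, hmargB c]
      _ ≤ ∑ c : γ, pC c := by
          refine Finset.sum_le_sum fun c _ => ?_
          by_cases h : pC c = 0
          · simp [h]
          · rw [mul_div_assoc, div_self h, mul_one]
      _ = 1 := μ.sum_dist C
  linarith
end FinProb

namespace FinProb

variable {Ω : Type*} [Fintype Ω] (μ : FinProb Ω)

lemma cmi_eq_zero_of_markov {α β γ : Type*} [Fintype α] [Fintype β] [Fintype γ]
    (A : Ω → α) (B : Ω → β) (C : Ω → γ)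
    (h : ∀ (a : α) (b : β) (c : γ),
      μ.dist (fun ω => (A ω, B ω, C ω)) (a, b, c) * μ.dist C c
        = μ.dist (fun ω => (A ω, C ω)) (a, c) * μ.dist (fun ω => (B ω, C ω)) (b, c)) :
    μ.cmi A B C = 0 := by
  rw [μ.cmi_eq_sum A B C]
  apply Finset.sum_eq_zero
  intro t _
  by_cases hp : μ.dist (fun ω => (A ω, B ω, C ω)) t = 0
  · rw [hp, zero_mul]
  · have hp' : 0 < μ.dist (fun ω => (A ω, B ω, C ω)) t :=
      lt_of_le_of_ne (μ.dist_nonneg _ t) (Ne.symm hp)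
    have h1 : 0 < μ.dist (fun ω => (A ω, C ω)) (t.1, t.2.2) :=
      lt_of_lt_of_le hp' (μ.dist_le_dist_comp (fun ω => (A ω, B ω, C ω)) (fun u => (u.1, u.2.2)) t)
    have h2 : 0 < μ.dist (fun ω => (B ω, C ω)) (t.2.1, t.2.2) :=
      lt_of_lt_of_le hp' (μ.dist_le_dist_comp (fun ω => (A ω, B ω, C ω)) (fun u => (u.2.1, u.2.2)) t)
    have h3 : 0 < μ.dist C t.2.2 :=
      lt_of_lt_of_le hp' (μ.dist_le_dist_comp (fun ω => (A ω, B ω, C ω)) (fun u => u.2.2) t)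
    have heq : μ.dist (fun ω => (A ω, B ω, C ω)) t * μ.dist C t.2.2
        = μ.dist (fun ω => (A ω, C ω)) (t.1, t.2.2) * μ.dist (fun ω => (B ω, C ω)) (t.2.1, t.2.2) :=
      h t.1 t.2.1 t.2.2
    have hlogeq : Real.logb 2 (μ.dist (fun ω => (A ω, B ω, C ω)) t) + Real.logb 2 (μ.dist C t.2.2)
        = Real.logb 2 (μ.dist (fun ω => (A ω, C ω)) (t.1, t.2.2))
          + Real.logb 2 (μ.dist (fun ω => (B ω, C ω)) (t.2.1, t.2.2)) := by
      rw [← Real.logb_mul hp'.ne' h3.ne', ← Real.logb_mul h1.ne' h2.ne', heq]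
    rw [show Real.logb 2 (μ.dist (fun ω => (A ω, B ω, C ω)) t) + Real.logb 2 (μ.dist C t.2.2)
        - Real.logb 2 (μ.dist (fun ω => (A ω, C ω)) (t.1, t.2.2))
        - Real.logb 2 (μ.dist (fun ω => (B ω, C ω)) (t.2.1, t.2.2)) = 0 from by
      rw [hlogeq]; ring]
    rw [mul_zero]

lemma mi_eq_zero_of_indep {α β : Type*} [Fintype α] [Fintype β]
    (A : Ω → α) (B : Ω → β)
    (h : ∀ (a : α) (b : β),
      μ.dist (fun ω => (A ω, B ω)) (a, b) = μ.dist A a * μ.dist B b) :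
    μ.mi A B = 0 := by
  have e1 : μ.H A = ∑ t : α × β,
      -(μ.dist (fun ω => (A ω, B ω)) t) * Real.logb 2 (μ.dist A t.1) :=
    μ.H_comp_eq (fun ω => (A ω, B ω)) (fun t => t.1) _ (fun ω => rfl)
  have e2 : μ.H B = ∑ t : α × β,
      -(μ.dist (fun ω => (A ω, B ω)) t) * Real.logb 2 (μ.dist B t.2) :=
    μ.H_comp_eq (fun ω => (A ω, B ω)) (fun t => t.2) _ (fun ω => rfl)
  have e3 : μ.H2 A B = ∑ t : α × β,
      -(μ.dist (fun ω => (A ω, B ω)) t) * Real.logb 2 (μ.dist (fun ω => (A ω, B ω)) t) :=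
    μ.H_comp_eq (fun ω => (A ω, B ω)) (fun t => t) _ (fun ω => rfl)
  unfold mi
  rw [e1, e2, e3, ← Finset.sum_add_distrib, ← Finset.sum_sub_distrib]
  apply Finset.sum_eq_zero
  intro t _
  by_cases hp : μ.dist (fun ω => (A ω, B ω)) t = 0
  · rw [hp]; ring
  · have hp' : 0 < μ.dist (fun ω => (A ω, B ω)) t :=
      lt_of_le_of_ne (μ.dist_nonneg _ t) (Ne.symm hp)
    have h1 : 0 < μ.dist A t.1 :=
      lt_of_lt_of_le hp' (μ.dist_le_dist_comp (fun ω => (A ω, B ω)) (fun u => u.1) t)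
    have h2 : 0 < μ.dist B t.2 :=
      lt_of_lt_of_le hp' (μ.dist_le_dist_comp (fun ω => (A ω, B ω)) (fun u => u.2) t)
    have heq : μ.dist (fun ω => (A ω, B ω)) t = μ.dist A t.1 * μ.dist B t.2 := h t.1 t.2
    rw [heq, Real.logb_mul h1.ne' h2.ne']
    ring

lemma mi_pair {α β γ : Type*} [Fintype α] [Fintype β] [Fintype γ]
    (A : Ω → α) (B : Ω → β) (C : Ω → γ) :
    μ.mi A (fun ω => (B ω, C ω)) = μ.mi A C + μ.cmi A B C := by
  unfold mi cmi H2
  ring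

lemma mi_comp_snd {α β β' : Type*} [Fintype α] [Fintype β] [Fintype β']
    (A : Ω → α) (B' : Ω → β') (e : β' → β) (he : Function.Injective e) :
    μ.mi A (fun ω => e (B' ω)) = μ.mi A B' := by
  unfold mi H2
  have h1 : μ.H (fun ω => e (B' ω)) = μ.H B' := μ.H_comp_inj B' e he
  have h2 : μ.H (fun ω => (A ω, e (B' ω))) = μ.H (fun ω => (A ω, B' ω)) :=
    μ.H_comp_inj (fun ω => (A ω, B' ω)) (fun p => (p.1, e p.2)) (by
      intro p q hpq
      simp only [Prod.mk.injEq] at hpq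
      exact Prod.ext hpq.1 (he hpq.2))
  rw [h1, h2]

lemma H_comp_le {α β : Type*} [Fintype α] [Fintype β] (V : Ω → α) (g : α → β) :
    μ.H (fun ω => g (V ω)) ≤ μ.H V := by
  have h1 : μ.H (fun ω => (V ω, g (V ω))) = μ.H V :=
    μ.H_comp_inj V (fun v => (v, g v)) (fun a b h => by
      simpa using congrArg Prod.fst h)
  have h2 : μ.H (fun ω => (V ω, V ω, g (V ω))) = μ.H (fun ω => (V ω, g (V ω))) :=
    μ.H_comp_inj (fun ω => (V ω, g (V ω))) (fun p => (p.1, p.1, p.2)) (by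
      intro p q hpq
      simp only [Prod.mk.injEq] at hpq
      exact Prod.ext hpq.1 hpq.2.2)
  have h3 : 0 ≤ μ.cmi V V (fun ω => g (V ω)) := μ.cmi_nonneg V V _
  unfold cmi H2 at h3
  linarith

lemma condH_comp_le {α β γ : Type*} [Fintype α] [Fintype β] [Fintype γ]
    (A : Ω → α) (V : Ω → β) (h : β → γ) :
    μ.condH A V ≤ μ.condH A (fun ω => h (V ω)) := by
  have e1 : μ.H (fun ω => (A ω, V ω)) = μ.H (fun ω => (A ω, V ω, h (V ω))) :=
    (μ.H_comp_inj (fun ω => (A ω, V ω)) (fun p => (p.1, p.2, h p.2)) (by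
      intro p q hpq
      simp only [Prod.mk.injEq] at hpq
      exact Prod.ext hpq.1 hpq.2.1)).symm
  have e2 : μ.H V = μ.H (fun ω => (V ω, h (V ω))) :=
    (μ.H_comp_inj V (fun v => (v, h v)) (fun a b hab => by
      simpa using congrArg Prod.fst hab)).symm
  have h3 : 0 ≤ μ.cmi A V (fun ω => h (V ω)) := μ.cmi_nonneg A V _
  unfold cmi H2 at h3
  unfold condH H2
  linarith

lemma cmi_eq_condH_of_det {α β γ : Type*} [Fintype α] [Fintype β] [Fintype γ]
    (A : Ω → α) (B : Ω → β) (C : Ω → γ) (ψ : α → γ → β)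
    (hB : ∀ ω, B ω = ψ (A ω) (C ω)) : μ.cmi A B C = μ.condH B C := by
  have e : μ.H (fun ω => (A ω, B ω, C ω)) = μ.H (fun ω => (A ω, C ω)) := by
    rw [show (fun ω => (A ω, B ω, C ω)) = (fun ω => (A ω, ψ (A ω) (C ω), C ω)) from
      funext fun ω => by rw [hB ω]]
    exact μ.H_comp_inj (fun ω => (A ω, C ω)) (fun p => (p.1, ψ p.1 p.2, p.2)) (by
      intro p q hpq
      simp only [Prod.mk.injEq] at hpq
      exact Prod.ext hpq.1 hpq.2.2)
  unfold cmi condH H2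
  rw [e]
  ring

end FinProb

set_option maxHeartbeats 1000000 in

/-- If `M — (Xⁿ,Sⁿ) — Yⁿ` is a Markov chain, `Sⁿ ⫫ M`, each `T_i` is a
function of `(X^{i−1}, S^i)`, and each `X_i` is a function of `(M, T^i)`, then
`I(M; Yⁿ) ≤ Σᵢ I(M, Y^{i−1}; X_i | S^{i−1}, X^{i−1}, T_i)`. -/
theorem stmt8 {Ω 𝒨 𝒳 𝒮 𝒴 𝒯 : Type} [Fintype Ω] [Fintype 𝒨] [Fintype 𝒳] [Fintype 𝒮]
    [Fintype 𝒴] [Fintype 𝒯] (μ : FinProb Ω) (n : ℕ)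
    (M : Ω → 𝒨) (X : Ω → Fin n → 𝒳) (S : Ω → Fin n → 𝒮) (Y : Ω → Fin n → 𝒴)
    (T : Ω → Fin n → 𝒯)
    (hMarkov : ∀ (m : 𝒨) (xs : (Fin n → 𝒳) × (Fin n → 𝒮)) (y : Fin n → 𝒴),
      μ.pr (fun ω => M ω = m ∧ (X ω, S ω) = xs ∧ Y ω = y) * μ.pr (fun ω => (X ω, S ω) = xs)
        = μ.pr (fun ω => M ω = m ∧ (X ω, S ω) = xs)
            * μ.pr (fun ω => (X ω, S ω) = xs ∧ Y ω = y))
    (hindep : ∀ (m : 𝒨) (s : Fin n → 𝒮),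
      μ.pr (fun ω => M ω = m ∧ S ω = s) = μ.dist M m * μ.dist S s)
    (g : (i : Fin n) → ((j : Fin n) → j < i → 𝒳) → ((j : Fin n) → j ≤ i → 𝒮) → 𝒯)
    (hT : ∀ ω i, T ω i = g i (fun j _ => X ω j) (fun j _ => S ω j))
    (f : (i : Fin n) → 𝒨 → ((j : Fin n) → j ≤ i → 𝒯) → 𝒳)
    (hX : ∀ ω i, X ω i = f i (M ω) (fun j _ => T ω j)) :
    μ.mi M Y ≤ ∑ i : Fin n,
      μ.cmi (fun ω => (M ω, fun j : {j : Fin n // j < i} => Y ω j))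
            (fun ω => X ω i)
            (fun ω => ((fun j : {j : Fin n // j < i} => S ω j),
                       (fun j : {j : Fin n // j < i} => X ω j), T ω i)) := by
  classical
  -- Step 1: I(M;Y) ≤ I(M;(X,S)) via Markov chain.
  have hmc0 : μ.cmi M Y (fun ω => (X ω, S ω)) = 0 := by
    apply μ.cmi_eq_zero_of_markov
    intro m y w
    have h1 : μ.dist (fun ω => (M ω, Y ω, (X ω, S ω))) (m, y, w)
        = μ.pr (fun ω => M ω = m ∧ (X ω, S ω) = w ∧ Y ω = y) :=
      μ.pr_congr fun ω => by
        show (M ω, Y ω, (X ω, S ω)) = (m, y, w) ↔ _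
        simp only [Prod.mk.injEq]
        tauto
    have h2 : μ.dist (fun ω => (X ω, S ω)) w = μ.pr (fun ω => (X ω, S ω) = w) := rfl
    have h3 : μ.dist (fun ω => (M ω, (X ω, S ω))) (m, w)
        = μ.pr (fun ω => M ω = m ∧ (X ω, S ω) = w) :=
      μ.pr_congr fun ω => by
        show (M ω, (X ω, S ω)) = (m, w) ↔ _
        simp only [Prod.mk.injEq]
    have h4 : μ.dist (fun ω => (Y ω, (X ω, S ω))) (y, w)
        = μ.pr (fun ω => (X ω, S ω) = w ∧ Y ω = y) :=
      μ.pr_congr fun ω => by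
        show (Y ω, (X ω, S ω)) = (y, w) ↔ _
        simp only [Prod.mk.injEq]
        tauto
    rw [h1, h2, h3, h4]
    exact hMarkov m w y
  have hA : μ.mi M (fun ω => ((X ω, S ω), Y ω))
      = μ.mi M Y + μ.cmi M (fun ω => (X ω, S ω)) Y :=
    μ.mi_pair M (fun ω => (X ω, S ω)) Y
  have hB : μ.mi M (fun ω => (Y ω, (X ω, S ω)))
      = μ.mi M (fun ω => (X ω, S ω)) + μ.cmi M Y (fun ω => (X ω, S ω)) :=
    μ.mi_pair M Y (fun ω => (X ω, S ω))
  have hswap : μ.mi M (fun ω => ((X ω, S ω), Y ω)) = μ.mi M (fun ω => (Y ω, (X ω, S ω))) :=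
    μ.mi_comp_snd M (fun ω => (Y ω, (X ω, S ω))) Prod.swap Prod.swap_injective
  have hge : 0 ≤ μ.cmi M (fun ω => (X ω, S ω)) Y := μ.cmi_nonneg _ _ _
  have step1 : μ.mi M Y ≤ μ.mi M (fun ω => (X ω, S ω)) := by linarith
  -- Step 2: I(M;(X,S)) = I(M;X|S) ≤ H(X|S).
  have hmi0 : μ.mi M S = 0 := by
    apply μ.mi_eq_zero_of_indep
    intro m s
    have h1 : μ.dist (fun ω => (M ω, S ω)) (m, s) = μ.pr (fun ω => M ω = m ∧ S ω = s) :=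
      μ.pr_congr fun ω => by
        show (M ω, S ω) = (m, s) ↔ _
        simp only [Prod.mk.injEq]
    rw [h1, hindep m s]
  have hC : μ.mi M (fun ω => (X ω, S ω)) = μ.mi M S + μ.cmi M X S := μ.mi_pair M X S
  have hD : μ.cmi M X S ≤ μ.condH X S := by
    have hle : μ.H (fun ω => (M ω, S ω)) ≤ μ.H (fun ω => (M ω, X ω, S ω)) :=
      μ.H_comp_le (fun ω => (M ω, X ω, S ω)) (fun p => (p.1, p.2.2))
    have e1 : μ.cmi M X S
        = μ.H (fun ω => (M ω, S ω)) + μ.H2 X S - μ.H (fun ω => (M ω, X ω, S ω)) - μ.H S := rfl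
    have e2 : μ.condH X S = μ.H2 X S - μ.H S := rfl
    linarith
  have step2 : μ.mi M (fun ω => (X ω, S ω)) ≤ μ.condH X S := by linarith
  -- Step 3: telescoping chain rule.
  set F : ℕ → ℝ := fun k =>
    μ.H (fun ω => ((fun j : {j : Fin n // (j : ℕ) < k} => X ω j.1), S ω)) with hF
  have hF0 : F 0 = μ.H S := by
    have heq : (fun ω => ((fun j : {j : Fin n // (j : ℕ) < 0} => X ω j.1), S ω))
        = (fun ω => ((fun j : {j : Fin n // (j : ℕ) < 0} =>
            absurd j.2 (Nat.not_lt_zero _)), S ω)) := by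
      funext ω
      exact congrArg (fun u => (u, S ω))
        (funext fun j => absurd j.2 (Nat.not_lt_zero _))
    show μ.H _ = μ.H S
    rw [heq]
    exact μ.H_comp_inj S (fun s => ((fun j => absurd j.2 (Nat.not_lt_zero _)), s))
      (fun a b h => congrArg Prod.snd h)
  have hFn : F n = μ.H2 X S := by
    show μ.H _ = _
    exact μ.H_comp_inj (fun ω => (X ω, S ω))
      (fun p : (Fin n → 𝒳) × (Fin n → 𝒮) =>
        ((fun j : {j : Fin n // (j : ℕ) < n} => p.1 j.1), p.2))
      (fun p q h => by
        have h1 : (fun j : {j : Fin n // (j : ℕ) < n} => p.1 j.1)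
            = (fun j : {j : Fin n // (j : ℕ) < n} => q.1 j.1) := congrArg Prod.fst h
        have h2' := congrArg (fun r : ({j : Fin n // (j : ℕ) < n} → 𝒳) × (Fin n → 𝒮) =>
          r.2) h
        have h2 : p.2 = q.2 := h2'
        exact Prod.ext (funext fun j => congrFun h1 ⟨j, j.isLt⟩) h2)
  have htel : ∑ i : Fin n, (F ((i : ℕ) + 1) - F (i : ℕ)) = F n - F 0 := by
    rw [Fin.sum_univ_eq_sum_range (fun k => F (k + 1) - F k) n]
    exact Finset.sum_range_sub F n
  -- Per-index step.
  have hstep : ∀ i : Fin n, F ((i : ℕ) + 1) - F (i : ℕ)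
      ≤ μ.cmi (fun ω => (M ω, fun j : {j : Fin n // j < i} => Y ω j))
          (fun ω => X ω i)
          (fun ω => ((fun j : {j : Fin n // j < i} => S ω j),
                     (fun j : {j : Fin n // j < i} => X ω j), T ω i)) := by
    intro i
    -- the conditioning variable at stage i (chain-rule form)
    set V : Ω → ({j : Fin n // (j : ℕ) < (i : ℕ)} → 𝒳) × (Fin n → 𝒮) :=
      fun ω => ((fun j => X ω j.1), S ω) with hV
    -- (a) F (i+1) = H(Xᵢ, V)
    have ha : F ((i : ℕ) + 1) = μ.H2 (fun ω => X ω i) V := by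
      show μ.H _ = μ.H _
      have heq : (fun ω => ((fun j : {j : Fin n // (j : ℕ) < (i : ℕ) + 1} => X ω j.1), S ω))
          = (fun ω => ((fun j : {j : Fin n // (j : ℕ) < (i : ℕ) + 1} =>
              if h : (j.1 : ℕ) < (i : ℕ) then (V ω).1 ⟨j.1, h⟩ else X ω i), S ω)) := by
        funext ω
        refine congrArg (fun u => (u, S ω)) (funext fun j => ?_)
        by_cases h : (j.1 : ℕ) < (i : ℕ)
        · rw [dif_pos h]
        · rw [dif_neg h]
          exact congrArg (X ω) (Fin.ext (by omega))
      rw [heq]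
      exact μ.H_comp_inj (fun ω => (X ω i, V ω))
        (fun p : 𝒳 × (({j : Fin n // (j : ℕ) < (i : ℕ)} → 𝒳) × (Fin n → 𝒮)) =>
          ((fun j : {j : Fin n // (j : ℕ) < (i : ℕ) + 1} =>
            if h : (j.1 : ℕ) < (i : ℕ) then p.2.1 ⟨j.1, h⟩ else p.1), p.2.2))
        (by
          intro p q hpq
          have h1 : (fun j : {j : Fin n // (j : ℕ) < (i : ℕ) + 1} =>
              if h : (j.1 : ℕ) < (i : ℕ) then p.2.1 ⟨j.1, h⟩ else p.1)
              = (fun j : {j : Fin n // (j : ℕ) < (i : ℕ) + 1} =>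
              if h : (j.1 : ℕ) < (i : ℕ) then q.2.1 ⟨j.1, h⟩ else q.1) :=
            congrArg Prod.fst hpq
          have h2' := congrArg (fun r : ({j : Fin n // (j : ℕ) < (i : ℕ) + 1} → 𝒳)
              × (Fin n → 𝒮) => r.2) hpq
          have h2 : p.2.2 = q.2.2 := h2'
          have htop : (if h : (i : ℕ) < (i : ℕ) then p.2.1 ⟨i, h⟩ else p.1)
              = (if h : (i : ℕ) < (i : ℕ) then q.2.1 ⟨i, h⟩ else q.1) :=
            congrFun h1 ⟨i, Nat.lt_succ_self _⟩
          simp only [dif_neg (lt_irrefl ((i : ℕ)))] at htop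
          have hcomp : ∀ j : {j : Fin n // (j : ℕ) < (i : ℕ)}, p.2.1 j = q.2.1 j := by
            intro j
            have hj : (if h : (j.1 : ℕ) < (i : ℕ) then p.2.1 ⟨j.1, h⟩ else p.1)
                = (if h : (j.1 : ℕ) < (i : ℕ) then q.2.1 ⟨j.1, h⟩ else q.1) :=
              congrFun h1 ⟨j.1, Nat.lt_succ_of_lt j.2⟩
            simp only [dif_pos j.2] at hj
            exact hj
          exact Prod.ext htop (Prod.ext (funext hcomp) h2))
    have hFi : F (i : ℕ) = μ.H V := rfl
    have hcond : F ((i : ℕ) + 1) - F (i : ℕ) = μ.condH (fun ω => X ω i) V := by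
      rw [ha, hFi]; rfl
    -- (b) conditioning on a function of V only increases condH
    have hb : μ.condH (fun ω => X ω i) V ≤ μ.condH (fun ω => X ω i)
        (fun ω => ((fun j : {j : Fin n // j < i} => S ω j),
                   (fun j : {j : Fin n // j < i} => X ω j), T ω i)) := by
      have := μ.condH_comp_le (fun ω => X ω i) V
        (fun p => ((fun j : {j : Fin n // j < i} => p.2 j.1),
                   (fun j : {j : Fin n // j < i} => p.1 ⟨j.1, j.2⟩),
                   g i (fun j hj => p.1 ⟨j, hj⟩) (fun j _ => p.2 j)))
      refine le_trans this (le_of_eq ?_)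
      congr 1
      funext ω
      refine congrArg (fun t => ((fun j : {j : Fin n // j < i} => S ω j.1),
        (fun j : {j : Fin n // j < i} => X ω j.1), t)) ?_
      exact (hT ω i).symm
    -- (c) determinism: Xᵢ is a function of ((M, Y^{<i}), Zᵢ)
    have hc : μ.cmi (fun ω => (M ω, fun j : {j : Fin n // j < i} => Y ω j))
          (fun ω => X ω i)
          (fun ω => ((fun j : {j : Fin n // j < i} => S ω j),
                     (fun j : {j : Fin n // j < i} => X ω j), T ω i))
        = μ.condH (fun ω => X ω i)
          (fun ω => ((fun j : {j : Fin n // j < i} => S ω j),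
                     (fun j : {j : Fin n // j < i} => X ω j), T ω i)) := by
      apply μ.cmi_eq_condH_of_det _ _ _
        (fun a z => f i a.1 (fun j hj =>
          if h : j < i then g j (fun k hk => z.2.1 ⟨k, lt_trans hk h⟩)
            (fun k hk => z.1 ⟨k, lt_of_le_of_lt hk h⟩)
          else z.2.2))
      intro ω
      rw [hX ω i]
      refine congrArg (f i (M ω)) ?_
      funext j hj
      by_cases h : j < i
      · rw [dif_pos h]
        exact hT ω j
      · rw [dif_neg h]
        have hji : j = i := le_antisymm hj (not_lt.mp h)
        rw [hji]
    linarith [hb, hcond, hc.ge, hc.le]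
  calc μ.mi M Y ≤ μ.condH X S := le_trans step1 step2
    _ = F n - F 0 := by rw [hFn, hF0]; rfl
    _ = ∑ i : Fin n, (F ((i : ℕ) + 1) - F (i : ℕ)) := htel.symm
    _ ≤ _ := Finset.sum_le_sum fun i _ => hstep i
end
end

section
/- (Functional Representation Lemma, cardinality-bounded form) For any finite random variables W and T with T taking values in 𝒯, there exists a random variable Z independent of W, taking values in an alphabet of size at most |𝒲|(|𝒯| − 1) + 1, and a deterministic function g such that T = g(W, Z) almost surely and the joint distribution of (W, T) is preserved. -/
open scoped BigOperators Classical
open Real Finset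

noncomputable section

set_option linter.unusedSectionVars false
namespace FRLAux


/-- filter range sum -/
lemma sum_ite_lt {N m : ℕ} (h : m ≤ N) (g : ℕ → ℝ) :
    ∑ k ∈ Finset.range N, (if k < m then g k else 0) = ∑ k ∈ Finset.range m, g k := by
  rw [← Finset.sum_filter]
  congr 1
  ext k
  simp only [Finset.mem_filter, Finset.mem_range]
  omega

lemma tele_half (s : ℕ → ℝ) (hs : Monotone s) {N b : ℕ} (hb : b ≤ N) :
    ∑ k ∈ Finset.range N, (if s k < s b then s (k+1) - s k else 0) = s b - s 0 := by
  have hex : ∃ j, ¬ s j < s b := ⟨b, lt_irrefl _⟩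
  have hmb : Nat.find hex ≤ b := Nat.find_le (lt_irrefl _)
  have hsm : s (Nat.find hex) = s b :=
    le_antisymm (hs hmb) (not_lt.mp (Nat.find_spec hex))
  have hcond : ∀ k, (s k < s b) ↔ k < Nat.find hex := by
    intro k
    constructor
    · intro hk
      rw [Nat.lt_find_iff]
      intro m hm
      exact not_not.mpr (lt_of_le_of_lt (hs hm) hk)
    · intro hk
      exact not_not.mp (Nat.find_min hex hk)
  rw [Finset.sum_congr rfl (fun k _ => if_congr (hcond k) rfl rfl),
    sum_ite_lt (le_trans hmb hb), Finset.sum_range_sub, hsm]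

lemma tele (s : ℕ → ℝ) (hs : Monotone s) {N a b : ℕ} (ha : a ≤ N) (hb : b ≤ N)
    (hab : s a ≤ s b) :
    ∑ k ∈ Finset.range N, (if s a ≤ s k ∧ s k < s b then s (k+1) - s k else 0)
      = s b - s a := by
  have key : ∀ k, (if s a ≤ s k ∧ s k < s b then s (k+1) - s k else 0)
      = (if s k < s b then s (k+1) - s k else 0) - (if s k < s a then s (k+1) - s k else 0) := by
    intro k
    by_cases h1 : s k < s a
    · have h2 : s k < s b := lt_of_lt_of_le h1 hab
      simp [h1, h2, not_le.mpr h1]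
    · by_cases h2 : s k < s b <;> simp [h1, h2, not_lt.mp h1]
  simp_rw [key]
  rw [Finset.sum_sub_distrib, tele_half s hs hb, tele_half s hs ha]
  ring



variable (S : Finset ℝ) (N : ℕ)

def sfun (k : ℕ) : ℝ := (S.sort (· ≤ ·)).getD k 1

variable {S N}
variable (hbd : ∀ x ∈ S, 0 ≤ x ∧ x ≤ 1) (hcard : S.card ≤ N + 1)
  (h0 : (0:ℝ) ∈ S) (h1 : (1:ℝ) ∈ S)

include hbd in
lemma sfun_mono : Monotone (sfun S) := by
  intro i j hij
  unfold sfun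
  set l := S.sort (· ≤ ·) with hl
  rcases lt_or_ge j l.length with hj | hj
  · rw [List.getD_eq_getElem _ _ (lt_of_le_of_lt hij hj), List.getD_eq_getElem _ _ hj]
    exact (Finset.pairwise_sort _ _).rel_get_of_le hij
  · rw [List.getD_eq_default _ _ hj]
    rcases lt_or_ge i l.length with hi | hi
    · rw [List.getD_eq_getElem _ _ hi]
      exact (hbd _ ((Finset.mem_sort _).mp (List.getElem_mem hi))).2
    · rw [List.getD_eq_default _ _ hi]

include hbd in
lemma sfun_nonneg (k : ℕ) : 0 ≤ sfun S k := by
  unfold sfun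
  rcases lt_or_ge k (S.sort (· ≤ ·)).length with hk | hk
  · rw [List.getD_eq_getElem _ _ hk]
    exact (hbd _ ((Finset.mem_sort _).mp (List.getElem_mem hk))).1
  · rw [List.getD_eq_default _ _ hk]; norm_num

include hbd in
lemma sfun_le_one (k : ℕ) : sfun S k ≤ 1 := by
  unfold sfun
  rcases lt_or_ge k (S.sort (· ≤ ·)).length with hk | hk
  · rw [List.getD_eq_getElem _ _ hk]
    exact (hbd _ ((Finset.mem_sort _).mp (List.getElem_mem hk))).2
  · rw [List.getD_eq_default _ _ hk]

include h0 hbd in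
lemma sfun_zero : sfun S 0 = 0 := by
  unfold sfun
  have hmem : (0:ℝ) ∈ S.sort (· ≤ ·) := (Finset.mem_sort _).mpr h0
  obtain ⟨i, hi⟩ := List.mem_iff_get.mp hmem
  have hlen : 0 < (S.sort (· ≤ ·)).length := lt_of_le_of_lt (Nat.zero_le _) i.isLt
  rw [List.getD_eq_getElem _ _ hlen]
  refine le_antisymm ?_ ?_
  · calc (S.sort (· ≤ ·)).get ⟨0, hlen⟩ ≤ (S.sort (· ≤ ·)).get i :=
        (Finset.pairwise_sort _ _).rel_get_of_le (Fin.mk_le_of_le_val (Nat.zero_le _))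
      _ = 0 := hi
  · exact (hbd _ ((Finset.mem_sort _).mp (List.getElem_mem hlen))).1

include h1 hbd hcard in
lemma sfun_last : sfun S N = 1 := by
  unfold sfun
  rcases lt_or_ge N (S.sort (· ≤ ·)).length with hN | hN
  · have hlen : (S.sort (· ≤ ·)).length = S.card := Finset.length_sort _
    have hmem : (1:ℝ) ∈ S.sort (· ≤ ·) := (Finset.mem_sort _).mpr h1
    obtain ⟨i, hi⟩ := List.mem_iff_get.mp hmem
    have hiN : (i : ℕ) ≤ N := by omega
    rw [List.getD_eq_getElem _ _ hN]
    refine le_antisymm ?_ ?_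
    · exact (hbd _ ((Finset.mem_sort _).mp (List.getElem_mem hN))).2
    · calc (1:ℝ) = (S.sort (· ≤ ·)).get i := hi.symm
        _ ≤ (S.sort (· ≤ ·)).get ⟨N, hN⟩ := (Finset.pairwise_sort _ _).rel_get_of_le hiN
  · rw [List.getD_eq_default _ _ hN]

include hcard in
lemma sfun_exists {x : ℝ} (hx : x ∈ S) : ∃ k ≤ N, sfun S k = x := by
  have hmem : x ∈ S.sort (· ≤ ·) := (Finset.mem_sort _).mpr hx
  obtain ⟨i, hi⟩ := List.mem_iff_get.mp hmem
  have hlen : (S.sort (· ≤ ·)).length = S.card := Finset.length_sort _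
  refine ⟨i, by omega, ?_⟩
  unfold sfun
  rw [List.getD_eq_getElem _ _ i.isLt]
  exact hi



variable {Ω 𝒲 𝒯 : Type} [Fintype Ω] [Fintype 𝒲] [Fintype 𝒯]

lemma pr_nonneg (μ : FinProb Ω) (E : Ω → Prop) : 0 ≤ μ.pr E :=
  Finset.sum_nonneg fun ω _ => by by_cases h : E ω <;> simp [FinProb.pr, h, μ.nonneg ω]

lemma pr_mono (μ : FinProb Ω) {E E' : Ω → Prop} (h : ∀ ω, E ω → E' ω) : μ.pr E ≤ μ.pr E' := by
  refine Finset.sum_le_sum fun ω _ => ?_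
  by_cases hE : E ω
  · simp [hE, h ω hE]
  · by_cases hE' : E' ω <;> simp [hE, hE', μ.nonneg ω]

section Main

variable (μ : FinProb Ω) (W : Ω → 𝒲) (T : Ω → 𝒯)

/-- joint pmf of (W,T) -/
def qq (w : 𝒲) (t : 𝒯) : ℝ := μ.pr (fun ω => W ω = w ∧ T ω = t)

/-- marginal of W -/
def pw (w : 𝒲) : ℝ := μ.pr (fun ω => W ω = w)

lemma qq_nonneg (w : 𝒲) (t : 𝒯) : 0 ≤ qq μ W T w t := pr_nonneg _ _

lemma pw_nonneg (w : 𝒲) : 0 ≤ pw μ W w := pr_nonneg _ _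

lemma sum_qq (w : 𝒲) : ∑ t, qq μ W T w t = pw μ W w := by
  unfold qq pw FinProb.pr
  rw [Finset.sum_comm]
  refine Finset.sum_congr rfl fun ω _ => ?_
  by_cases h : W ω = w
  · simp [h]
  · simp [h]

lemma sum_pw : ∑ w, pw μ W w = 1 := by
  unfold pw FinProb.pr
  rw [Finset.sum_comm]
  rw [← μ.sum_one]
  refine Finset.sum_congr rfl fun ω _ => ?_
  simp

/-- conditional CDF of T given W = w, indexed by position in the enumeration of 𝒯 -/
def cum (w : 𝒲) (i : ℕ) : ℝ :=
  (∑ t ∈ Finset.univ.filter (fun t => ((Fintype.equivFin 𝒯 t : ℕ) < i)), qq μ W T w t)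
    / pw μ W w

lemma cum_mono (w : 𝒲) : Monotone (cum μ W T w) := by
  intro i j hij
  unfold cum
  rcases eq_or_lt_of_le (pw_nonneg μ W w) with h | h
  · rw [← h]; simp
  · rw [div_le_div_iff_of_pos_right h]
    refine Finset.sum_le_sum_of_subset_of_nonneg ?_ (fun t _ _ => qq_nonneg μ W T w t)
    intro t ht
    simp only [Finset.mem_filter, Finset.mem_univ, true_and] at ht ⊢
    omega

lemma cum_zero (w : 𝒲) : cum μ W T w 0 = 0 := by
  unfold cum
  rw [Finset.filter_false_of_mem (fun t _ => by omega)]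
  simp

lemma cum_top (w : 𝒲) (h : pw μ W w ≠ 0) : cum μ W T w (Fintype.card 𝒯) = 1 := by
  unfold cum
  rw [Finset.filter_true_of_mem (fun t _ => (Fintype.equivFin 𝒯 t).isLt), sum_qq]
  exact div_self h

lemma cum_nonneg (w : 𝒲) (i : ℕ) : 0 ≤ cum μ W T w i :=
  div_nonneg (Finset.sum_nonneg fun t _ => qq_nonneg μ W T w t) (pw_nonneg μ W w)

lemma cum_le_one (w : 𝒲) (i : ℕ) : cum μ W T w i ≤ 1 := by
  unfold cum
  rcases eq_or_lt_of_le (pw_nonneg μ W w) with h | h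
  · rw [← h]; simp
  · rw [div_le_one h, ← sum_qq μ W T w]
    exact Finset.sum_le_sum_of_subset_of_nonneg (Finset.filter_subset _ _)
      (fun t _ _ => qq_nonneg μ W T w t)

lemma cum_succ_sub (w : 𝒲) (t : 𝒯) :
    cum μ W T w ((Fintype.equivFin 𝒯 t : ℕ) + 1) - cum μ W T w (Fintype.equivFin 𝒯 t : ℕ)
      = qq μ W T w t / pw μ W w := by
  unfold cum
  rw [div_sub_div_same]
  congr 1
  have hset : Finset.univ.filter (fun t' => ((Fintype.equivFin 𝒯 t' : ℕ) < (Fintype.equivFin 𝒯 t : ℕ) + 1))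
      = insert t (Finset.univ.filter (fun t' => ((Fintype.equivFin 𝒯 t' : ℕ) < (Fintype.equivFin 𝒯 t : ℕ)))) := by
    ext t'
    simp only [Finset.mem_filter, Finset.mem_univ, true_and, Finset.mem_insert]
    constructor
    · intro h
      rcases eq_or_lt_of_le (Nat.lt_succ_iff.mp h) with h' | h'
      · left
        exact (Fintype.equivFin 𝒯).injective (Fin.ext h')
      · right; exact h'
    · rintro (rfl | h)
      · omega
      · omega
  rw [hset, Finset.sum_insert (by simp)]
  ring


lemma Fm_ex (w : 𝒲) (u : ℝ) :
    ∃ j, u < cum μ W T w (j+1) ∨ Fintype.card 𝒯 ≤ j :=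
  ⟨Fintype.card 𝒯, Or.inr le_rfl⟩

def Fm [Nonempty 𝒯] (w : 𝒲) (u : ℝ) : 𝒯 :=
  if hj : Nat.find (Fm_ex μ W T w u) < Fintype.card 𝒯
  then (Fintype.equivFin 𝒯).symm ⟨Nat.find (Fm_ex μ W T w u), hj⟩
  else Classical.arbitrary 𝒯

lemma Fm_eq_iff [Nonempty 𝒯] (w : 𝒲) (hpw : pw μ W w ≠ 0) {u : ℝ}
    (hu0 : 0 ≤ u) (hu1 : u < 1) (t : 𝒯) :
    Fm μ W T w u = t ↔
      cum μ W T w (Fintype.equivFin 𝒯 t : ℕ) ≤ u ∧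
        u < cum μ W T w ((Fintype.equivFin 𝒯 t : ℕ) + 1) := by
  have hc : 0 < Fintype.card 𝒯 := Fintype.card_pos
  set c := Fintype.card 𝒯 with hcdef
  set i := (Fintype.equivFin 𝒯 t : ℕ) with hidef
  have hic : i < c := (Fintype.equivFin 𝒯 t).isLt
  have hwit : u < cum μ W T w ((c - 1) + 1) := by
    have h11 : c - 1 + 1 = c := by omega
    rw [h11, cum_top μ W T w hpw]
    exact hu1
  have hfle : Nat.find (Fm_ex μ W T w u) ≤ c - 1 := Nat.find_le (Or.inl hwit)
  have hflt : Nat.find (Fm_ex μ W T w u) < c := by omega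
  have hFm : Fm μ W T w u = (Fintype.equivFin 𝒯).symm ⟨Nat.find (Fm_ex μ W T w u), hflt⟩ := by
    rw [Fm, dif_pos hflt]
  have hspec : u < cum μ W T w (Nat.find (Fm_ex μ W T w u) + 1) := by
    rcases Nat.find_spec (Fm_ex μ W T w u) with h | h
    · exact h
    · omega
  constructor
  · intro ht
    have hfi : Nat.find (Fm_ex μ W T w u) = i := by
      rw [hFm] at ht
      have := congrArg (Fintype.equivFin 𝒯) ht
      rw [Equiv.apply_symm_apply] at this
      exact congrArg Fin.val this
    constructor
    · rcases Nat.eq_zero_or_pos i with h0 | h0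
      · rw [h0, cum_zero]; exact hu0
      · have hmin := Nat.find_min (Fm_ex μ W T w u) (show i - 1 < Nat.find (Fm_ex μ W T w u) by omega)
        push_neg at hmin
        have h2 := hmin.1
        have h11 : i - 1 + 1 = i := by omega
        rwa [h11] at h2
    · rw [← hfi]; exact hspec
  · rintro ⟨hA, hB⟩
    have hle : Nat.find (Fm_ex μ W T w u) ≤ i := Nat.find_le (Or.inl hB)
    have heq : Nat.find (Fm_ex μ W T w u) = i := by
      rcases eq_or_lt_of_le hle with h | h
      · exact h
      · exfalso
        have : cum μ W T w (Nat.find (Fm_ex μ W T w u) + 1) ≤ cum μ W T w i :=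
          cum_mono μ W T w (by omega)
        exact absurd (lt_of_lt_of_le hspec (le_trans this hA)) (lt_irrefl _)
    rw [hFm]
    have : (⟨Nat.find (Fm_ex μ W T w u), hflt⟩ : Fin c) = Fintype.equivFin 𝒯 t :=
      Fin.ext heq
    rw [this, Equiv.symm_apply_apply]

end Main
end FRLAux
/-- Functional Representation Lemma, cardinality-bounded form:
for finite random variables `W, T` there is a probability space carrying `(W', Z)` with
`Z` independent of `W'`, `Z` taking at most `|𝒲|(|𝒯|−1)+1` values, and a deterministic
`g` such that `(W', g(W',Z))` has the same joint law as `(W, T)`. -/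
theorem stmt12 {Ω 𝒲 𝒯 : Type} [Fintype Ω] [Fintype 𝒲] [Fintype 𝒯]
    (μ : FinProb Ω) (W : Ω → 𝒲) (T : Ω → 𝒯) :
    ∃ (μ' : FinProb (𝒲 × Fin (Fintype.card 𝒲 * (Fintype.card 𝒯 - 1) + 1)))
      (g : 𝒲 → Fin (Fintype.card 𝒲 * (Fintype.card 𝒯 - 1) + 1) → 𝒯),
      (∀ w z, μ'.pr (fun ω => ω.1 = w ∧ ω.2 = z)
          = μ'.dist Prod.fst w * μ'.dist Prod.snd z) ∧
      (∀ w t, μ'.pr (fun ω => ω.1 = w ∧ g ω.1 ω.2 = t)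
          = μ.pr (fun ω => W ω = w ∧ T ω = t)) := by
  classical
  have hNeΩ : Nonempty Ω := by
    by_contra h
    rw [not_nonempty_iff] at h
    have h1 := μ.sum_one
    rw [Finset.univ_eq_empty, Finset.sum_empty] at h1
    norm_num at h1
  haveI := hNeΩ
  haveI hNeT : Nonempty 𝒯 := ⟨T (Classical.arbitrary Ω)⟩
  set c := Fintype.card 𝒯 with hc
  set N := Fintype.card 𝒲 * (c - 1) + 1 with hNdef
  set S : Finset ℝ := insert 0 (insert 1 ((Finset.univ : Finset (𝒲 × Fin (c - 1))).image
    (fun p => FRLAux.cum μ W T p.1 ((p.2 : ℕ) + 1)))) with hS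
  have hbd : ∀ x ∈ S, 0 ≤ x ∧ x ≤ 1 := by
    intro x hx
    rw [hS] at hx
    simp only [Finset.mem_insert, Finset.mem_image, Finset.mem_univ, true_and] at hx
    rcases hx with rfl | rfl | ⟨p, rfl⟩
    · norm_num
    · norm_num
    · exact ⟨FRLAux.cum_nonneg μ W T _ _, FRLAux.cum_le_one μ W T _ _⟩
  have hcard : S.card ≤ N + 1 := by
    rw [hS]
    refine le_trans (Finset.card_insert_le _ _) ?_
    refine le_trans (Nat.add_le_add_right (Finset.card_insert_le _ _) 1) ?_
    have himg := Finset.card_image_le (s := (Finset.univ : Finset (𝒲 × Fin (c - 1))))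
      (f := fun p => FRLAux.cum μ W T p.1 ((p.2 : ℕ) + 1))
    have huniv : (Finset.univ : Finset (𝒲 × Fin (c - 1))).card = Fintype.card 𝒲 * (c - 1) := by
      rw [Finset.card_univ, Fintype.card_prod, Fintype.card_fin]
    omega
  have h0S : (0:ℝ) ∈ S := by rw [hS]; exact Finset.mem_insert_self _ _
  have h1S : (1:ℝ) ∈ S := by
    rw [hS]; exact Finset.mem_insert_of_mem (Finset.mem_insert_self _ _)
  have hmono : Monotone (FRLAux.sfun S) := FRLAux.sfun_mono hbd
  have hs0 : FRLAux.sfun S 0 = 0 := FRLAux.sfun_zero hbd h0S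
  have hsN : FRLAux.sfun S N = 1 := FRLAux.sfun_last hbd hcard h1S
  set gap : ℕ → ℝ := fun k => FRLAux.sfun S (k+1) - FRLAux.sfun S k with hgap
  have hgap0 : ∀ k, 0 ≤ gap k := fun k => sub_nonneg.mpr (hmono (Nat.le_succ k))
  have hsumZ : ∑ k : Fin N, gap (k : ℕ) = 1 := by
    rw [Fin.sum_univ_eq_sum_range gap N, hgap, Finset.sum_range_sub (fun k => FRLAux.sfun S k),
      hs0, hsN]
    norm_num
  have hone : ∑ x : 𝒲 × Fin N, FRLAux.pw μ W x.1 * gap (x.2 : ℕ) = 1 := by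
    rw [Fintype.sum_prod_type]
    have h1 : ∀ w : 𝒲, ∑ k : Fin N, FRLAux.pw μ W w * gap (k : ℕ) = FRLAux.pw μ W w := by
      intro w
      rw [← Finset.mul_sum, hsumZ, mul_one]
    rw [Finset.sum_congr rfl (fun w _ => h1 w)]
    exact FRLAux.sum_pw μ W
  set μ' : FinProb (𝒲 × Fin N) := ⟨fun x => FRLAux.pw μ W x.1 * gap (x.2 : ℕ),
      fun x => mul_nonneg (FRLAux.pw_nonneg μ W _) (hgap0 _), hone⟩ with hμ'
  refine ⟨μ', fun w k => FRLAux.Fm μ W T w (FRLAux.sfun S (k : ℕ)), ?_, ?_⟩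
  · -- independence
    intro w z
    have hpr : μ'.pr (fun ω => ω.1 = w ∧ ω.2 = z) = FRLAux.pw μ W w * gap (z : ℕ) := by
      rw [hμ']
      unfold FinProb.pr
      dsimp only
      rw [Fintype.sum_prod_type]
      rw [Finset.sum_eq_single w (fun a _ ha => Finset.sum_eq_zero fun k _ => by simp [ha])
        (fun h => absurd (Finset.mem_univ w) h)]
      simp
    have hfst : μ'.dist Prod.fst w = FRLAux.pw μ W w := by
      rw [hμ']
      unfold FinProb.dist FinProb.pr
      dsimp only
      rw [Fintype.sum_prod_type]
      rw [Finset.sum_eq_single w (fun a _ ha => Finset.sum_eq_zero fun k _ => by simp [ha])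
        (fun h => absurd (Finset.mem_univ w) h)]
      simp only [eq_self_iff_true, if_true]
      rw [← Finset.mul_sum, hsumZ, mul_one]
    have hsnd : μ'.dist Prod.snd z = gap (z : ℕ) := by
      rw [hμ']
      unfold FinProb.dist FinProb.pr
      dsimp only
      rw [Fintype.sum_prod_type]
      trans (∑ a : 𝒲, FRLAux.pw μ W a * gap (z : ℕ))
      · exact Finset.sum_congr rfl fun a _ => by simp
      · rw [← Finset.sum_mul, FRLAux.sum_pw μ W, one_mul]
    rw [hpr, hfst, hsnd]
  · -- joint law preserved
    intro w t
    have hred : μ'.pr (fun ω => ω.1 = w ∧ FRLAux.Fm μ W T ω.1 (FRLAux.sfun S (ω.2 : ℕ)) = t)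
        = FRLAux.pw μ W w *
          ∑ k : Fin N, (if FRLAux.Fm μ W T w (FRLAux.sfun S (k : ℕ)) = t then gap (k : ℕ) else 0) := by
      rw [hμ']
      unfold FinProb.pr
      dsimp only
      rw [Fintype.sum_prod_type]
      rw [Finset.sum_eq_single w (fun a _ ha => Finset.sum_eq_zero fun k _ => by simp [ha])
        (fun h => absurd (Finset.mem_univ w) h)]
      rw [Finset.mul_sum]
      refine Finset.sum_congr rfl fun k _ => ?_
      by_cases hcnd : FRLAux.Fm μ W T w (FRLAux.sfun S (k : ℕ)) = t <;> simp [hcnd]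
    rw [hred]
    show _ = FRLAux.qq μ W T w t
    by_cases hpw : FRLAux.pw μ W w = 0
    · have hq0 : FRLAux.qq μ W T w t = 0 :=
        le_antisymm (le_trans (FRLAux.pr_mono μ (fun ω h => h.1)) (le_of_eq hpw))
          (FRLAux.pr_nonneg μ _)
      rw [hpw, hq0, zero_mul]
    · set i := (Fintype.equivFin 𝒯 t : ℕ) with hi
      have hic : i < c := (Fintype.equivFin 𝒯 t).isLt
      have hAmem : FRLAux.cum μ W T w i ∈ S := by
        rcases Nat.eq_zero_or_pos i with h0 | h0
        · rw [h0, FRLAux.cum_zero μ W T w]; exact h0S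
        · rw [hS]
          refine Finset.mem_insert_of_mem (Finset.mem_insert_of_mem ?_)
          refine Finset.mem_image.mpr ⟨(w, ⟨i - 1, by omega⟩), Finset.mem_univ _, ?_⟩
          show FRLAux.cum μ W T w (i - 1 + 1) = FRLAux.cum μ W T w i
          rw [show i - 1 + 1 = i from by omega]
      have hBmem : FRLAux.cum μ W T w (i + 1) ∈ S := by
        rcases eq_or_lt_of_le (Nat.succ_le_of_lt hic) with hE | hE
        · have hE' : i + 1 = c := hE
          rw [hE', FRLAux.cum_top μ W T w hpw]; exact h1S
        · rw [hS]
          refine Finset.mem_insert_of_mem (Finset.mem_insert_of_mem ?_)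
          exact Finset.mem_image.mpr ⟨(w, ⟨i, by omega⟩), Finset.mem_univ _, rfl⟩
      obtain ⟨a, haN, hsa⟩ := FRLAux.sfun_exists hcard hAmem
      obtain ⟨b, hbN, hsb⟩ := FRLAux.sfun_exists hcard hBmem
      have hab : FRLAux.sfun S a ≤ FRLAux.sfun S b := by
        rw [hsa, hsb]; exact FRLAux.cum_mono μ W T w (Nat.le_succ i)
      have htele := FRLAux.tele (FRLAux.sfun S) hmono haN hbN hab
      have hpt : ∀ k ∈ Finset.range N,
          (if FRLAux.Fm μ W T w (FRLAux.sfun S k) = t then gap k else 0)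
            = (if FRLAux.sfun S a ≤ FRLAux.sfun S k ∧ FRLAux.sfun S k < FRLAux.sfun S b
                then FRLAux.sfun S (k+1) - FRLAux.sfun S k else 0) := by
        intro k _
        rcases lt_or_ge (FRLAux.sfun S k) 1 with hk1 | hk1
        · rw [hgap]
          refine if_congr ?_ rfl rfl
          rw [FRLAux.Fm_eq_iff μ W T w hpw (FRLAux.sfun_nonneg hbd k) hk1 t, hsa, hsb]
        · have hk1' : FRLAux.sfun S k = 1 := le_antisymm (FRLAux.sfun_le_one hbd k) hk1
          have hk2 : FRLAux.sfun S (k+1) = 1 :=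
            le_antisymm (FRLAux.sfun_le_one hbd (k+1)) (hk1' ▸ hmono (Nat.le_succ k))
          have hz : FRLAux.sfun S (k+1) - FRLAux.sfun S k = 0 := by rw [hk1', hk2]; ring
          have hz' : gap k = 0 := by rw [hgap]; exact hz
          rw [hz', hz]
          simp
      have hsum : ∑ k : Fin N,
          (if FRLAux.Fm μ W T w (FRLAux.sfun S (k : ℕ)) = t then gap (k : ℕ) else 0)
          = FRLAux.qq μ W T w t / FRLAux.pw μ W w := by
        rw [Fin.sum_univ_eq_sum_range
          (fun k => if FRLAux.Fm μ W T w (FRLAux.sfun S k) = t then gap k else 0) N]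
        rw [Finset.sum_congr rfl hpt, htele, hsa, hsb]
        rw [hi]
        exact FRLAux.cum_succ_sub μ W T w t
      rw [hsum, mul_comm, div_mul_cancel₀ _ hpw]
end
end

section
/- For the binary two-component channel: if A, Ũ are independent fair bits, S = (S⁽⁰⁾,S⁽¹⁾) uniform on {0,1}² independent of (A,Ũ), and the input is X = (A, Ũ ⊕ S⁽⁰⁾), then I(A, Ũ; Y) = 3/2 bits, where Y = (A, Ũ ⊕ S⁽⁰⁾ ⊕ S⁽ᴬ⁾). -/
open scoped BigOperators Classical
open Real Finset

noncomputable section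

/-- With `A, Ũ` independent fair bits and `S` uniform on `{0,1}²`
independent of `(A,Ũ)`, input `X = (A, Ũ ⊕ S⁽⁰⁾)` gives
`Y = (A, Ũ ⊕ S⁽⁰⁾ ⊕ S⁽ᴬ⁾)` and `I(A,Ũ; Y) = 3/2` bits. -/
theorem stmt15 {Ω : Type} [Fintype Ω] (μ : FinProb Ω)
    (A Ut : Ω → Bool) (S : Ω → Bool × Bool) (Y : Ω → Bool × Bool)
    (hjoint : ∀ (a u : Bool) (s : Bool × Bool),
      μ.pr (fun ω => A ω = a ∧ Ut ω = u ∧ S ω = s) = 1 / 16)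
    (hY : ∀ ω, Y ω = (A ω, xor (xor (Ut ω) (S ω).1)
        (if A ω then (S ω).2 else (S ω).1))) :
    μ.mi (fun ω => (A ω, Ut ω)) Y = 3 / 2 := by
  classical
  have prCongr : ∀ (E F : Ω → Prop), (∀ ω, E ω ↔ F ω) → μ.pr E = μ.pr F := by
    intro E F h
    have : E = F := funext fun ω => propext (h ω)
    rw [this]
  have prSum : ∀ (E : Ω → Prop) [inst : ∀ ω, Decidable (E ω)],
      μ.pr E = ∑ ω, if E ω then μ.p ω else 0 := by
    intro E inst
    unfold FinProb.pr
    refine Finset.sum_congr rfl fun ω _ => ?_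
    rw [Subsingleton.elim (Classical.propDecidable (E ω)) (inst ω)]
  have hT : ∀ t : Bool × Bool × (Bool × Bool),
      μ.pr (fun ω => (A ω, Ut ω, S ω) = t) = 1 / 16 := by
    rintro ⟨a, u, s⟩
    rw [← hjoint a u s]
    exact prCongr _ _ fun ω => by simp [Prod.ext_iff]
  have key : ∀ {α : Type} [Fintype α] [DecidableEq α]
      (g : Bool × Bool × (Bool × Bool) → α) (x : α),
      μ.pr (fun ω => g (A ω, Ut ω, S ω) = x)
        = ∑ t : Bool × Bool × (Bool × Bool), (if g t = x then (1/16 : ℝ) else 0) := by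
    intro α _ _ g x
    rw [prSum (fun ω => g (A ω, Ut ω, S ω) = x)]
    have step : ∀ ω, (if g (A ω, Ut ω, S ω) = x then μ.p ω else 0)
        = ∑ t : Bool × Bool × (Bool × Bool),
            (if (A ω, Ut ω, S ω) = t then (if g t = x then μ.p ω else 0) else 0) := by
      intro ω
      rw [Finset.sum_ite_eq]
      simp
    simp_rw [step]
    rw [Finset.sum_comm]
    refine Finset.sum_congr rfl fun t _ => ?_
    by_cases h : g t = x
    · simp only [h, if_true]
      rw [← prSum (fun ω => (A ω, Ut ω, S ω) = t)]
      exact hT t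
    · simp [h]
  have dAU : ∀ x : Bool × Bool, μ.dist (fun ω => (A ω, Ut ω)) x = 1/4 := by
    rintro ⟨a, u⟩
    refine Eq.trans (key (fun t => (t.1, t.2.1)) (a, u)) ?_
    cases a <;> cases u <;>
      · simp [Fintype.sum_prod_type, Fintype.sum_bool, Prod.ext_iff]
        norm_num
  have dY : ∀ y : Bool × Bool, μ.dist Y y = 1/4 := by
    rintro ⟨a, b⟩
    have h1 : μ.dist Y (a, b) = μ.pr (fun ω =>
        (A ω, xor (xor (Ut ω) (S ω).1) (if A ω then (S ω).2 else (S ω).1)) = (a, b)) :=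
      prCongr _ _ fun ω => by rw [hY ω]
    refine h1.trans (Eq.trans (key (fun t => (t.1, xor (xor t.2.1 t.2.2.1)
        (if t.1 then t.2.2.2 else t.2.2.1))) (a, b)) ?_)
    cases a <;> cases b <;>
      · simp [Fintype.sum_prod_type, Fintype.sum_bool, Prod.ext_iff]
        norm_num
  have dJ : ∀ p : (Bool × Bool) × Bool × Bool,
      μ.dist (fun ω => ((A ω, Ut ω), Y ω)) p
        = ∑ t : Bool × Bool × (Bool × Bool),
            (if ((t.1, t.2.1), (t.1, xor (xor t.2.1 t.2.2.1)
                (if t.1 then t.2.2.2 else t.2.2.1))) = p then (1/16 : ℝ) else 0) := by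
    intro p
    have h1 : μ.dist (fun ω => ((A ω, Ut ω), Y ω)) p = μ.pr (fun ω =>
        ((A ω, Ut ω), (A ω, xor (xor (Ut ω) (S ω).1)
          (if A ω then (S ω).2 else (S ω).1))) = p) :=
      prCongr _ _ fun ω => by simp only [hY]
    exact h1.trans (key (fun t => ((t.1, t.2.1), (t.1, xor (xor t.2.1 t.2.2.1)
        (if t.1 then t.2.2.2 else t.2.2.1)))) p)
  have l2 : Real.logb 2 (2:ℝ) = 1 := Real.logb_self_eq_one (by norm_num)
  have l4 : Real.logb 2 (1/4 : ℝ) = -2 := by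
    rw [show (1/4:ℝ) = ((2:ℝ)^(2:ℕ))⁻¹ by norm_num, Real.logb_inv, Real.logb_pow, l2]
    norm_num
  have l4' : Real.logb 2 (4 : ℝ) = 2 := by
    rw [show (4:ℝ) = (2:ℝ)^(2:ℕ) by norm_num, Real.logb_pow, l2]; norm_num
  have l8 : Real.logb 2 (1/8 : ℝ) = -3 := by
    rw [show (1/8:ℝ) = ((2:ℝ)^(3:ℕ))⁻¹ by norm_num, Real.logb_inv, Real.logb_pow, l2]
    norm_num
  have l8' : Real.logb 2 (8 : ℝ) = 3 := by
    rw [show (8:ℝ) = (2:ℝ)^(3:ℕ) by norm_num, Real.logb_pow, l2]; norm_num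
  have hH1 : μ.H (fun ω => (A ω, Ut ω)) = 2 := by
    unfold FinProb.H
    simp_rw [dAU]
    simp [Fintype.sum_prod_type, Fintype.sum_bool]
    norm_num [l4, l4']
  have hH2 : μ.H Y = 2 := by
    unfold FinProb.H
    simp_rw [dY]
    simp [Fintype.sum_prod_type, Fintype.sum_bool]
    norm_num [l4, l4']
  have hHJ : μ.H2 (fun ω => (A ω, Ut ω)) Y = 5/2 := by
    unfold FinProb.H2 FinProb.H
    simp_rw [dJ]
    simp only [Fintype.sum_prod_type, Fintype.sum_bool, Prod.mk.injEq]
    norm_num [l4, l8, l4', l8']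
  unfold FinProb.mi
  rw [hH1, hH2, hHJ]
  norm_num
end
end
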